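/- arXiv:2511.05963 — 6 statements merged into one kernel-verified Lean document; each statement's English description precedes it below -/
import Mathlib

section
/- Suppose next-token consistency holds at every time t with 1 ≤ t ≤ T−1 and transition consistency holds at every time t with 1 ≤ t ≤ T−2. Then for every t with 1 ≤ t ≤ T−1, the hidden state h_t is a belief state for X_{1:t}. -/
open MeasureTheory ProbabilityTheory Filter

noncomputable section

/-- The tuple of tokens `(X_{s+1}, …, X_{s+n})`. -/
def tup {Ω 𝒳 : Type*} (X : ℕ → Ω → 𝒳) (s n : ℕ) (ω : Ω) : Fin n → 𝒳 :=
  fun i => X (s + 1 + (i : ℕ)) ω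

/-- Real-valued indicator of a set. -/
def ind {Ω : Type*} (A : Set Ω) : Ω → ℝ := A.indicator 1

/-- A bounded measurable function is integrable w.r.t. a finite measure. -/
lemma integrable_of_bdd'' {Ω : Type*} [MeasurableSpace Ω] {μ : Measure Ω} [IsFiniteMeasure μ]
    {F : Ω → ℝ} (hF : AEStronglyMeasurable F μ) {C : ℝ} (hC : ∀ ω, |F ω| ≤ C) :
    Integrable F μ :=
  (integrable_const C).mono' hF (Filter.Eventually.of_forall fun ω => by
    simpa [Real.norm_eq_abs] using hC ω)

/-- Finite sums of a.e. equal functions are a.e. equal. -/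
lemma ae_finset_sum_congr {Ω ι : Type*} [MeasurableSpace Ω] {μ : Measure Ω} [Countable ι]
    (s : Finset ι) {f g : ι → Ω → ℝ} (h : ∀ i, f i =ᵐ[μ] g i) :
    (∑ i ∈ s, f i) =ᵐ[μ] ∑ i ∈ s, g i := by
  have hall : ∀ᵐ ω ∂μ, ∀ i, f i ω = g i ω := ae_all_iff.mpr h
  filter_upwards [hall] with ω hω
  simp only [Finset.sum_apply]
  exact Finset.sum_congr rfl fun i _ => hω i

/-- Doob–Dynkin factorization for bounded real functions measurable w.r.t. a comap σ-algebra. -/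
lemma exists_factor_of_comap {Ω H : Type*} [mH : MeasurableSpace H] {Y : Ω → H} {F : Ω → ℝ}
    (hF : Measurable[mH.comap Y] F) {C : ℝ} (hC : 0 ≤ C) (hFC : ∀ ω, |F ω| ≤ C) :
    ∃ φ : H → ℝ, Measurable φ ∧ (∀ x, |φ x| ≤ C) ∧ ∀ ω, F ω = φ (Y ω) := by
  classical
  have hq : ∀ q : ℚ, ∃ B : Set H, MeasurableSet B ∧ Y ⁻¹' B = {ω | (q : ℝ) < F ω} :=
    fun q => (MeasurableSpace.measurableSet_comap).mp (hF measurableSet_Ioi)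
  choose B hBmeas hBeq using hq
  set v : ℚ → H → ℝ := fun q x => if x ∈ B q then max (min (q : ℝ) C) (-C) else -C with hv
  have hvb : ∀ q x, -C ≤ v q x ∧ v q x ≤ C := by
    intro q x
    by_cases h : x ∈ B q
    · simp only [hv, if_pos h]
      exact ⟨le_max_right _ _, max_le (le_trans (min_le_right _ _) le_rfl) (by linarith)⟩
    · simp only [hv, if_neg h]
      exact ⟨le_rfl, by linarith⟩
  have hbdd : ∀ x, BddAbove (Set.range fun q => v q x) := by
    intro x
    exact ⟨C, by rintro y ⟨q, rfl⟩; exact (hvb q x).2⟩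
  refine ⟨fun x => ⨆ q : ℚ, v q x, ?_, ?_, ?_⟩
  · exact Measurable.iSup fun q => Measurable.ite (hBmeas q) measurable_const measurable_const
  · intro x
    rw [abs_le]
    constructor
    · exact le_trans (hvb 0 x).1 (le_ciSup (hbdd x) 0)
    · exact ciSup_le fun q => (hvb q x).2
  · intro ω
    have hmem : ∀ q : ℚ, Y ω ∈ B q ↔ (q : ℝ) < F ω := by
      intro q
      rw [← Set.mem_preimage, hBeq]
      exact Iff.rfl
    have h1 := abs_le.mp (hFC ω)
    apply le_antisymm
    · rcases eq_or_lt_of_le h1.1 with heq | hlt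
      · exact le_trans heq.ge (le_trans (hvb 0 (Y ω)).1 (le_ciSup (hbdd (Y ω)) 0))
      · apply le_of_forall_lt
        intro w hw
        obtain ⟨q, hq1, hq2⟩ := exists_rat_btwn (max_lt hw hlt : max w (-C) < F ω)
        have hYq : Y ω ∈ B q := (hmem q).mpr hq2
        have hvq : v q (Y ω) = (q : ℝ) := by
          have hqC : (q : ℝ) ≤ C := le_trans hq2.le h1.2
          have hqnC : -C ≤ (q : ℝ) := le_trans (le_max_right w (-C)) hq1.le
          simp only [hv, if_pos hYq, min_eq_left hqC, max_eq_left hqnC]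
        calc w < (q : ℝ) := lt_of_le_of_lt (le_max_left w (-C)) hq1
          _ = v q (Y ω) := hvq.symm
          _ ≤ ⨆ q : ℚ, v q (Y ω) := le_ciSup (hbdd (Y ω)) q
    · apply ciSup_le
      intro q
      by_cases h : Y ω ∈ B q
      · have hq : (q : ℝ) < F ω := (hmem q).mp h
        simp only [hv, if_pos h]
        exact max_le (le_trans (min_le_left _ _) hq.le) h1.1
      · simp only [hv, if_neg h]
        exact h1.1

/-- If conditional expectations w.r.t. two sub-σ-algebras agree on all indicators of
`Y`-measurable sets, they agree on all bounded measurable functions of `Y`. -/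
lemma condexp_comp_ae_eq_of_indicator {Ω H : Type*} {m₁ m₂ : MeasurableSpace Ω}
    [mΩ : MeasurableSpace Ω] [mH : MeasurableSpace H] (hm₁ : m₁ ≤ mΩ) (hm₂ : m₂ ≤ mΩ)
    {μ : Measure Ω} [IsProbabilityMeasure μ] {Y : Ω → H} (hY : Measurable Y)
    (hind : ∀ B : Set H, MeasurableSet B →
      (μ[ind {ω | Y ω ∈ B}|m₁]) =ᵐ[μ] μ[ind {ω | Y ω ∈ B}|m₂])
    {φ : H → ℝ} (hφ : Measurable φ) {C : ℝ} (hφC : ∀ x, |φ x| ≤ C) :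
    (μ[fun ω => φ (Y ω)|m₁]) =ᵐ[μ] μ[fun ω => φ (Y ω)|m₂] := by
  haveI : SigmaFinite (μ.trim hm₁) := by
    haveI := isFiniteMeasure_trim (μ := μ) hm₁; infer_instance
  haveI : SigmaFinite (μ.trim hm₂) := by
    haveI := isFiniteMeasure_trim (μ := μ) hm₂; infer_instance
  -- Step 1: simple functions
  have hsimple : ∀ s : SimpleFunc H ℝ,
      (μ[fun ω => s (Y ω)|m₁]) =ᵐ[μ] μ[fun ω => s (Y ω)|m₂] := by
    intro s
    induction s using SimpleFunc.induction with
    | const c hs =>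
      rename_i B
      have hfun : (fun ω => (SimpleFunc.piecewise B hs (SimpleFunc.const H c)
          (SimpleFunc.const H 0)) (Y ω)) = c • ind {ω | Y ω ∈ B} := by
        funext ω
        by_cases h : Y ω ∈ B <;>
          simp [SimpleFunc.piecewise_apply, ind, Set.indicator, h]
      rw [hfun]
      refine (condExp_smul c _ _).trans (EventuallyEq.trans ?_ (condExp_smul c _ _).symm)
      filter_upwards [hind B hs] with ω hω
      simp [hω]
    | add hdisj hPf hPg =>
      rename_i f g
      have hfun : (fun ω => (f + g) (Y ω)) =
          (fun ω => f (Y ω)) + fun ω => g (Y ω) := by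
        funext ω; simp
      obtain ⟨Cf, hCf⟩ := f.exists_forall_norm_le
      obtain ⟨Cg, hCg⟩ := g.exists_forall_norm_le
      have hif : Integrable (fun ω => f (Y ω)) μ :=
        integrable_of_bdd'' ((f.measurable.comp hY).aestronglyMeasurable)
          (fun ω => by simpa [Real.norm_eq_abs] using hCf (Y ω))
      have hig : Integrable (fun ω => g (Y ω)) μ :=
        integrable_of_bdd'' ((g.measurable.comp hY).aestronglyMeasurable)
          (fun ω => by simpa [Real.norm_eq_abs] using hCg (Y ω))
      rw [hfun]
      exact (condExp_add hif hig _).trans ((hPf.add hPg).trans (condExp_add hif hig _).symm)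
  -- Step 2: approximation
  set fs : ℕ → SimpleFunc H ℝ := SimpleFunc.approxOn φ hφ Set.univ 0 (Set.mem_univ 0) with hfs
  have h_tend : ∀ x, Tendsto (fun n => fs n x) atTop (nhds (φ x)) :=
    fun x => SimpleFunc.tendsto_approxOn hφ _ (by simp)
  have h_bound : ∀ n x, ‖fs n x‖ ≤ C + C := by
    intro n x
    refine (SimpleFunc.norm_approxOn_zero_le hφ _ x n).trans ?_
    have := hφC x
    rw [Real.norm_eq_abs]
    linarith
  have hFn_meas : ∀ n, AEStronglyMeasurable (fun ω => fs n (Y ω)) μ :=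
    fun n => ((fs n).measurable.comp hY).aestronglyMeasurable
  have hFn_bound : ∀ n, ∀ᵐ ω ∂μ, ‖fs n (Y ω)‖ ≤ C + C :=
    fun n => Eventually.of_forall fun ω => h_bound n (Y ω)
  have hFn_tend : ∀ᵐ ω ∂μ, Tendsto (fun n => fs n (Y ω)) atTop (nhds (φ (Y ω))) :=
    Eventually.of_forall fun ω => h_tend (Y ω)
  have hT1 : Tendsto (fun n => condExpL1 hm₁ μ fun ω => fs n (Y ω)) atTop
      (nhds (condExpL1 hm₁ μ fun ω => φ (Y ω))) :=
    tendsto_condExpL1_of_dominated_convergence hm₁ (fun _ => C + C) hFn_meas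
      (integrable_const _) hFn_bound hFn_tend
  have hT2 : Tendsto (fun n => condExpL1 hm₂ μ fun ω => fs n (Y ω)) atTop
      (nhds (condExpL1 hm₂ μ fun ω => φ (Y ω))) :=
    tendsto_condExpL1_of_dominated_convergence hm₂ (fun _ => C + C) hFn_meas
      (integrable_const _) hFn_bound hFn_tend
  have hn_eq : ∀ n, condExpL1 hm₁ μ (fun ω => fs n (Y ω)) =
      condExpL1 hm₂ μ (fun ω => fs n (Y ω)) := by
    intro n
    ext1
    exact (condExp_ae_eq_condExpL1 hm₁ _).symm.trans
      ((hsimple (fs n)).trans (condExp_ae_eq_condExpL1 hm₂ _))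
  have hmain : condExpL1 hm₁ μ (fun ω => φ (Y ω)) = condExpL1 hm₂ μ (fun ω => φ (Y ω)) :=
    tendsto_nhds_unique_of_eventuallyEq hT1 hT2 (Eventually.of_forall hn_eq)
  refine (condExp_ae_eq_condExpL1 hm₁ _).trans ?_
  rw [hmain]
  exact (condExp_ae_eq_condExpL1 hm₂ _).symm

/-- If next-token consistency holds at every time `1 ≤ t ≤ T-1` and
transition consistency holds at every time `1 ≤ t ≤ T-2`, then for every `1 ≤ t ≤ T-1`
the hidden state `h t` is a belief state for `X_{1:t}`. -/
theorem nextlat_yields_belief_states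
    {Ω 𝒳 H : Type*}
    [MeasurableSpace Ω] [MeasurableSpace 𝒳] [DiscreteMeasurableSpace 𝒳]
    [Fintype 𝒳] [Nonempty 𝒳]
    [MeasurableSpace H] [StandardBorelSpace H]
    (μ : Measure Ω) [IsProbabilityMeasure μ]
    (T : ℕ) (hT : 2 ≤ T)
    (X : ℕ → Ω → 𝒳) (hX : ∀ t, Measurable (X t))
    (h : ℕ → Ω → H) (g : (t : ℕ) → (Fin t → 𝒳) → H)
    (hg : ∀ t, 1 ≤ t → t ≤ T → Measurable (g t))
    (hgh : ∀ t, 1 ≤ t → t ≤ T → ∀ ω, h t ω = g t (tup X 0 t ω))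
    -- next-token consistency at every time `1 ≤ t ≤ T-1`
    (hnext : ∀ t, 1 ≤ t → t ≤ T - 1 → ∀ a : 𝒳,
      (μ[ind {ω | X (t + 1) ω = a} | MeasurableSpace.comap (h t) inferInstance])
        =ᵐ[μ]
      (μ[ind {ω | X (t + 1) ω = a} | MeasurableSpace.comap (tup X 0 t) inferInstance]))
    -- transition consistency at every time `1 ≤ t ≤ T-2`
    (htrans : ∀ t, 1 ≤ t → t ≤ T - 2 → ∀ B : Set H, MeasurableSet B →
      (μ[ind {ω | h (t + 1) ω ∈ B} |
          MeasurableSpace.comap (fun ω => (h t ω, X (t + 1) ω)) inferInstance])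
        =ᵐ[μ]
      (μ[ind {ω | h (t + 1) ω ∈ B} |
          MeasurableSpace.comap (tup X 0 (t + 1)) inferInstance])) :
    -- conclusion: `h t` is a belief state for `X_{1:t}` for every `1 ≤ t ≤ T-1`
    ∀ t, 1 ≤ t → t ≤ T - 1 →
      ∀ f : (Fin (T - t) → 𝒳) → ℝ, Measurable f → (∃ C, ∀ y, |f y| ≤ C) →
        (μ[fun ω => f (tup X t (T - t) ω) | MeasurableSpace.comap (h t) inferInstance])
          =ᵐ[μ]
        (μ[fun ω => f (tup X t (T - t) ω) |
            MeasurableSpace.comap (tup X 0 t) inferInstance]) := by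
  classical
  -- measurability of the tuple maps and basic σ-algebra comparisons
  have htupm : ∀ s n : ℕ, Measurable (tup X s n) := fun s n =>
    measurable_pi_lambda _ fun i => hX _
  have hcomap_tup_le : ∀ s n : ℕ,
      MeasurableSpace.comap (tup X s n) inferInstance ≤ ‹MeasurableSpace Ω› :=
    fun s n => (htupm s n).comap_le
  have hhm : ∀ t, 1 ≤ t → t ≤ T → Measurable (h t) := by
    intro t h1 h2
    have hht : h t = g t ∘ tup X 0 t := funext (hgh t h1 h2)
    rw [hht]
    exact (hg t h1 h2).comp (htupm 0 t)
  have hm12 : ∀ t, 1 ≤ t → t ≤ T →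
      MeasurableSpace.comap (h t) inferInstance ≤
        MeasurableSpace.comap (tup X 0 t) inferInstance := by
    intro t h1 h2
    have hht : h t = g t ∘ tup X 0 t := funext (hgh t h1 h2)
    rw [hht, ← MeasurableSpace.comap_comp]
    exact MeasurableSpace.comap_mono (hg t h1 h2).comap_le
  have hm1Ω : ∀ t, 1 ≤ t → t ≤ T →
      MeasurableSpace.comap (h t) inferInstance ≤ ‹MeasurableSpace Ω› :=
    fun t h1 h2 => (hm12 t h1 h2).trans (hcomap_tup_le 0 t)
  have hm2step : ∀ t : ℕ,
      MeasurableSpace.comap (tup X 0 t) inferInstance ≤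
        MeasurableSpace.comap (tup X 0 (t + 1)) inferInstance := by
    intro t
    have hre : tup X 0 t =
        (fun (y : Fin (t + 1) → 𝒳) (i : Fin t) => y i.castSucc) ∘ tup X 0 (t + 1) := by
      funext ω i
      simp [tup, Fin.coe_castSucc]
    rw [hre, ← MeasurableSpace.comap_comp]
    exact MeasurableSpace.comap_mono
      (measurable_pi_lambda _ fun i => measurable_pi_apply _).comap_le
  have hXeq : ∀ t : ℕ, X (t + 1) =
      (fun y : Fin (t + 1) → 𝒳 => y (Fin.last t)) ∘ tup X 0 (t + 1) := by
    intro t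
    funext ω
    simp only [Function.comp_apply]
    unfold tup
    have harith : 0 + 1 + ((Fin.last t : Fin (t + 1)) : ℕ) = t + 1 := by
      rw [Fin.val_last]; omega
    rw [harith]
  have hXm2' : ∀ t : ℕ,
      Measurable[MeasurableSpace.comap (tup X 0 (t + 1)) inferInstance] (X (t + 1)) := by
    intro t
    rw [hXeq t]
    exact (measurable_pi_apply _).comp (comap_measurable _)
  have hpairle : ∀ t, 1 ≤ t → t + 1 ≤ T →
      MeasurableSpace.comap (fun ω => (h t ω, X (t + 1) ω)) inferInstance ≤
        MeasurableSpace.comap (tup X 0 (t + 1)) inferInstance := by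
    intro t h1 h2
    have heq : (fun ω => (h t ω, X (t + 1) ω)) =
        (fun y : Fin (t + 1) → 𝒳 =>
          (g t fun i : Fin t => y i.castSucc, y (Fin.last t))) ∘ tup X 0 (t + 1) := by
      funext ω
      simp only [Function.comp_apply, Prod.mk.injEq]
      constructor
      · rw [hgh t h1 (by omega) ω]
        rfl
      · exact congrFun (hXeq t) ω
    rw [heq, ← MeasurableSpace.comap_comp]
    refine MeasurableSpace.comap_mono (Measurable.comap_le (Measurable.prodMk ?_ ?_))
    · exact (hg t h1 (by omega)).comp (measurable_pi_lambda _ fun i => measurable_pi_apply _)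
    · exact measurable_pi_apply _
  -- the key induction
  have key : ∀ n : ℕ, ∀ t : ℕ, 1 ≤ t → t + n = T →
      ∀ f : (Fin n → 𝒳) → ℝ, Measurable f → ∀ C : ℝ, (∀ y, |f y| ≤ C) →
      (μ[fun ω => f (tup X t n ω)|MeasurableSpace.comap (h t) inferInstance]) =ᵐ[μ]
        μ[fun ω => f (tup X t n ω)|MeasurableSpace.comap (tup X 0 t) inferInstance] := by
    intro n
    induction n with
    | zero =>
      intro t h1 hsum f hfm C hfC
      have hconst : (fun ω => f (tup X t 0 ω)) = fun _ : Ω => f fun i => i.elim0 := by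
        funext ω; congr 1; funext i; exact i.elim0
      rw [hconst, condExp_const (hm1Ω t h1 (by omega)), condExp_const (hcomap_tup_le 0 t)]
    | succ m ih =>
      intro t h1 hsum f hfm C hfC
      have h2 : t + 1 ≤ T := by omega
      have ht1T : t ≤ T - 1 := by omega
      have hC0 : 0 ≤ C := le_trans (abs_nonneg _) (hfC fun _ => Classical.arbitrary 𝒳)
      set fa : 𝒳 → (Fin m → 𝒳) → ℝ := fun a y => f (Fin.cons a y) with hfa
      have hcons_meas : ∀ a : 𝒳,
          Measurable fun y : Fin m → 𝒳 => (Fin.cons a y : Fin (m + 1) → 𝒳) := by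
        intro a
        apply measurable_pi_lambda
        intro i
        refine Fin.cases ?_ ?_ i
        · simp only [Fin.cons_zero]; exact measurable_const
        · intro j
          simp only [Fin.cons_succ]
          exact measurable_pi_apply j
      have hfam : ∀ a, Measurable (fa a) := fun a => hfm.comp (hcons_meas a)
      have hfaC : ∀ a y, |fa a y| ≤ C := fun a y => hfC _
      have hdecomp : ∀ ω, f (tup X t (m + 1) ω) =
          ∑ a : 𝒳, ind {ω' | X (t + 1) ω' = a} ω * fa a (tup X (t + 1) m ω) := by
        intro ω
        have hz : ∀ b ∈ Finset.univ, b ≠ X (t + 1) ω →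
            ind {ω' | X (t + 1) ω' = b} ω * fa b (tup X (t + 1) m ω) = 0 := by
          intro b _ hb
          have hnot : ω ∉ {ω' | X (t + 1) ω' = b} := fun hc => hb (Eq.symm hc)
          have hzero : ind {ω' | X (t + 1) ω' = b} ω = 0 := by
            simp [ind, Set.indicator_of_notMem hnot]
          rw [hzero, zero_mul]
        rw [Finset.sum_eq_single (X (t + 1) ω) hz
          fun hmem => absurd (Finset.mem_univ _) hmem]
        have hone : ind {ω' | X (t + 1) ω' = X (t + 1) ω} ω = 1 := by
          have hmem : ω ∈ {ω' | X (t + 1) ω' = X (t + 1) ω} := rfl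
          simp [ind, Set.indicator_of_mem hmem]
        rw [hone, one_mul]
        show f (tup X t (m + 1) ω) = f (Fin.cons (X (t + 1) ω) (tup X (t + 1) m ω))
        congr 1
        funext i
        refine Fin.cases ?_ ?_ i
        · simp [tup]
        · intro j
          simp only [tup, Fin.cons_succ, Fin.val_succ]
          have harith : t + 1 + ((j : ℕ) + 1) = t + 1 + 1 + (j : ℕ) := by omega
          rw [harith]
      have hGm : ∀ a, Measurable fun ω => fa a (tup X (t + 1) m ω) :=
        fun a => (hfam a).comp (htupm (t + 1) m)
      have hGC : ∀ a (ω : Ω), |fa a (tup X (t + 1) m ω)| ≤ C := fun a ω => hfaC a _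
      have hGint : ∀ a, Integrable (fun ω => fa a (tup X (t + 1) m ω)) μ :=
        fun a => integrable_of_bdd'' (hGm a).aestronglyMeasurable (hGC a)
      have hindabs : ∀ (A : Set Ω) (ω : Ω), |ind A ω| ≤ 1 := by
        intro A ω
        by_cases hω : ω ∈ A
        · simp [ind, Set.indicator_of_mem hω]
        · simp [ind, Set.indicator_of_notMem hω]
      have hindm : ∀ a : 𝒳, Measurable (ind {ω' | X (t + 1) ω' = a}) := by
        intro a
        exact measurable_one.indicator (hX (t + 1) (measurableSet_singleton a))
      have hind_sm2' : ∀ a : 𝒳,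
          StronglyMeasurable[MeasurableSpace.comap (tup X 0 (t + 1)) inferInstance]
            (ind {ω' | X (t + 1) ω' = a}) := by
        intro a
        exact stronglyMeasurable_one.indicator (hXm2' t (measurableSet_singleton a))
      have hprodint : ∀ a : 𝒳, Integrable
          (fun ω => ind {ω' | X (t + 1) ω' = a} ω * fa a (tup X (t + 1) m ω)) μ := by
        intro a
        refine integrable_of_bdd'' (((hindm a).mul (hGm a)).aestronglyMeasurable) (C := C) ?_
        intro ω
        rw [abs_mul]
        calc |ind {ω' | X (t + 1) ω' = a} ω| * |fa a (tup X (t + 1) m ω)| ≤ 1 * C :=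
              mul_le_mul (hindabs _ _) (hGC a ω) (abs_nonneg _) zero_le_one
          _ = C := one_mul C
      have hFeq : (fun ω => f (tup X t (m + 1) ω)) =
          ∑ a : 𝒳, fun ω => ind {ω' | X (t + 1) ω' = a} ω * fa a (tup X (t + 1) m ω) := by
        funext ω
        simp only [Finset.sum_apply]
        exact hdecomp ω
      rcases Nat.eq_zero_or_pos m with hm0 | hmpos
      · -- base case: one token to go; only next-token consistency is needed
        subst hm0
        rw [hFeq]
        have hterm : ∀ a : 𝒳,
            (fun ω => ind {ω' | X (t + 1) ω' = a} ω * fa a (tup X (t + 1) 0 ω)) =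
              fa a (fun i => i.elim0) • ind {ω' | X (t + 1) ω' = a} := by
          intro a
          funext ω
          have hconst : fa a (tup X (t + 1) 0 ω) = fa a fun i => i.elim0 := by
            congr 1; funext i; exact i.elim0
          rw [hconst, Pi.smul_apply, smul_eq_mul, mul_comm]
        refine (condExp_finsetSum (fun a _ => hprodint a) _).trans
          (EventuallyEq.trans ?_ (condExp_finsetSum (fun a _ => hprodint a) _).symm)
        refine ae_finset_sum_congr _ fun a => ?_
        rw [hterm a]
        refine (condExp_smul _ _ _).trans
          (EventuallyEq.trans ?_ (condExp_smul _ _ _).symm)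
        filter_upwards [hnext t h1 ht1T a] with ω hω
        simp only [Pi.smul_apply, smul_eq_mul, hω]
      · -- inductive step: use transition consistency
        have ht2T : t ≤ T - 2 := by omega
        have hm2'Ω := hcomap_tup_le 0 (t + 1)
        have hm22' := hm2step t
        have hm2Ω := hcomap_tup_le 0 t
        have hm1Ωt := hm1Ω t h1 (by omega)
        have hm12t := hm12 t h1 (by omega)
        have hpair := hpairle t h1 h2
        have hpairΩ := hpair.trans hm2'Ω
        haveI hsf2' : SigmaFinite (μ.trim hm2'Ω) := by
          haveI := isFiniteMeasure_trim (μ := μ) hm2'Ω; infer_instance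
        haveI hsf2 : SigmaFinite (μ.trim hm2Ω) := by
          haveI := isFiniteMeasure_trim (μ := μ) hm2Ω; infer_instance
        haveI hsf1 : SigmaFinite (μ.trim hm1Ωt) := by
          haveI := isFiniteMeasure_trim (μ := μ) hm1Ωt; infer_instance
        have hstep : ∀ a : 𝒳, ∃ Ψ : Ω → ℝ,
            Measurable[MeasurableSpace.comap (h t) inferInstance] Ψ ∧ (∀ ω, |Ψ ω| ≤ C) ∧
            (μ[(fun ω => ind {ω' | X (t + 1) ω' = a} ω * fa a (tup X (t + 1) m ω))|
              MeasurableSpace.comap (tup X 0 t) inferInstance]) =ᵐ[μ]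
            fun ω => Ψ ω *
              (μ[ind {ω' | X (t + 1) ω' = a}|MeasurableSpace.comap (h t) inferInstance]) ω := by
          intro a
          -- induction hypothesis at time t+1
          have hIH := ih (t + 1) (by omega) (by omega) (fa a) (hfam a) C (hfaC a)
          -- the condexp w.r.t. σ(h (t+1)) is a.e. bounded by C
          have hca_bdd : ∀ᵐ ω ∂μ, abs ((μ[(fun ω' => fa a (tup X (t + 1) m ω'))|
              MeasurableSpace.comap (h (t + 1)) inferInstance]) ω) ≤ C := by
            have hb : ∀ᵐ ω ∂μ, |fa a (tup X (t + 1) m ω)| ≤ (C.toNNReal : ℝ) := by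
              refine Eventually.of_forall fun ω => ?_
              rw [Real.coe_toNNReal C hC0]
              exact hGC a ω
            have hres := ae_bdd_condExp_of_ae_bdd
              (m := MeasurableSpace.comap (h (t + 1)) inferInstance) hb
            filter_upwards [hres] with ω hω
            rwa [Real.coe_toNNReal C hC0] at hω
          -- truncated version of that condexp
          set ca : Ω → ℝ := fun ω => max (-C) (min ((μ[(fun ω' => fa a (tup X (t + 1) m ω'))|
            MeasurableSpace.comap (h (t + 1)) inferInstance]) ω) C) with hca
          have hca_eq : (μ[(fun ω' => fa a (tup X (t + 1) m ω'))|
              MeasurableSpace.comap (h (t + 1)) inferInstance]) =ᵐ[μ] ca := by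
            filter_upwards [hca_bdd] with ω hω
            have h' := abs_le.mp hω
            simp only [hca]
            rw [min_eq_left h'.2, max_eq_right h'.1]
          have hca_meas : Measurable[MeasurableSpace.comap (h (t + 1)) inferInstance] ca :=
            measurable_const.max (stronglyMeasurable_condExp.measurable.min measurable_const)
          have hca_bdd' : ∀ ω, |ca ω| ≤ C := by
            intro ω
            rw [abs_le]
            exact ⟨le_max_left _ _, max_le (by linarith) (min_le_right _ _)⟩
          obtain ⟨φa, hφa_meas, hφa_bdd, hφa_eq⟩ :=
            exists_factor_of_comap (Y := h (t + 1)) (F := ca) hca_meas hC0 hca_bdd'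
          -- conditional expectation given the full past factors through h (t+1)
          have hGa2' : (μ[(fun ω' => fa a (tup X (t + 1) m ω'))|
              MeasurableSpace.comap (tup X 0 (t + 1)) inferInstance]) =ᵐ[μ]
              fun ω => φa (h (t + 1) ω) := by
            have hcaφ : ca = fun ω => φa (h (t + 1) ω) := funext hφa_eq
            rw [← hcaφ]
            exact hIH.symm.trans hca_eq
          -- transition consistency, extended to bounded measurable functions
          have htr : (μ[(fun ω => φa (h (t + 1) ω))|
              MeasurableSpace.comap (fun ω => (h t ω, X (t + 1) ω)) inferInstance]) =ᵐ[μ]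
              μ[(fun ω => φa (h (t + 1) ω))|
                MeasurableSpace.comap (tup X 0 (t + 1)) inferInstance] := by
            refine condexp_comp_ae_eq_of_indicator hpairΩ hm2'Ω
              (hhm (t + 1) (by omega) (by omega)) ?_ hφa_meas hφa_bdd
            intro B hB
            exact htrans t h1 ht2T B hB
          -- condexp of φa ∘ h (t+1) given (h t, X (t+1)), truncated and factored
          have hφh_meas : Measurable fun ω => φa (h (t + 1) ω) :=
            hφa_meas.comp (hhm (t + 1) (by omega) (by omega))
          have hφh_int : Integrable (fun ω => φa (h (t + 1) ω)) μ :=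
            integrable_of_bdd'' hφh_meas.aestronglyMeasurable fun ω => hφa_bdd _
          have hcp_bdd : ∀ᵐ ω ∂μ, abs ((μ[(fun ω' => φa (h (t + 1) ω'))|
              MeasurableSpace.comap (fun ω' => (h t ω', X (t + 1) ω')) inferInstance]) ω) ≤ C := by
            have hb : ∀ᵐ ω ∂μ, |φa (h (t + 1) ω)| ≤ (C.toNNReal : ℝ) := by
              refine Eventually.of_forall fun ω => ?_
              rw [Real.coe_toNNReal C hC0]
              exact hφa_bdd _
            have hres := ae_bdd_condExp_of_ae_bdd
              (m := MeasurableSpace.comap (fun ω' => (h t ω', X (t + 1) ω')) inferInstance) hb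
            filter_upwards [hres] with ω hω
            rwa [Real.coe_toNNReal C hC0] at hω
          set cpa : Ω → ℝ := fun ω => max (-C) (min ((μ[(fun ω' => φa (h (t + 1) ω'))|
            MeasurableSpace.comap (fun ω' => (h t ω', X (t + 1) ω')) inferInstance]) ω) C)
            with hcpa
          have hcpa_eq : (μ[(fun ω' => φa (h (t + 1) ω'))|
              MeasurableSpace.comap (fun ω' => (h t ω', X (t + 1) ω')) inferInstance])
              =ᵐ[μ] cpa := by
            filter_upwards [hcp_bdd] with ω hω
            have h' := abs_le.mp hω
            simp only [hcpa]
            rw [min_eq_left h'.2, max_eq_right h'.1]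
          have hcpa_meas : Measurable[MeasurableSpace.comap
              (fun ω' => (h t ω', X (t + 1) ω')) inferInstance] cpa :=
            measurable_const.max (stronglyMeasurable_condExp.measurable.min measurable_const)
          have hcpa_bdd' : ∀ ω, |cpa ω| ≤ C := by
            intro ω
            rw [abs_le]
            exact ⟨le_max_left _ _, max_le (by linarith) (min_le_right _ _)⟩
          obtain ⟨ψa, hψa_meas, hψa_bdd, hψa_eq⟩ :=
            exists_factor_of_comap (Y := fun ω' => (h t ω', X (t + 1) ω')) (F := cpa)
              hcpa_meas hC0 hcpa_bdd'
          -- the conditional expectation of φa ∘ h (t+1) given the full past, as a function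
          -- of (h t, X (t+1))
          have hφ2' : (μ[(fun ω' => φa (h (t + 1) ω'))|
              MeasurableSpace.comap (tup X 0 (t + 1)) inferInstance]) =ᵐ[μ]
              fun ω => ψa (h t ω, X (t + 1) ω) := by
            have hcpaψ : cpa = fun ω => ψa (h t ω, X (t + 1) ω) := funext hψa_eq
            rw [← hcpaψ]
            exact htr.symm.trans hcpa_eq
          -- first inner step : pull out the indicator at level m₂'
          have hmul1 : (fun ω => ind {ω' | X (t + 1) ω' = a} ω * fa a (tup X (t + 1) m ω)) =
              ind {ω' | X (t + 1) ω' = a} * fun ω => fa a (tup X (t + 1) m ω) := rfl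
          have hinner1 : (μ[(fun ω => ind {ω' | X (t + 1) ω' = a} ω *
              fa a (tup X (t + 1) m ω))|MeasurableSpace.comap (tup X 0 (t + 1)) inferInstance])
              =ᵐ[μ] fun ω => ind {ω' | X (t + 1) ω' = a} ω * φa (h (t + 1) ω) := by
            rw [hmul1]
            refine (condExp_mul_of_stronglyMeasurable_left (hind_sm2' a) ?_ (hGint a)).trans ?_
            · rw [← hmul1]; exact hprodint a
            · filter_upwards [hGa2'] with ω hω
              rw [Pi.mul_apply, hω]
          -- second inner step : pull out the indicator again at level m₂'
          have hindφ_int : Integrable (fun ω => ind {ω' | X (t + 1) ω' = a} ω *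
              φa (h (t + 1) ω)) μ := by
            refine integrable_of_bdd'' (((hindm a).mul hφh_meas).aestronglyMeasurable)
              (C := C) ?_
            intro ω
            rw [abs_mul]
            calc |ind {ω' | X (t + 1) ω' = a} ω| * |φa (h (t + 1) ω)| ≤ 1 * C :=
                  mul_le_mul (hindabs _ _) (hφa_bdd _) (abs_nonneg _) zero_le_one
              _ = C := one_mul C
          have hmul2 : (fun ω => ind {ω' | X (t + 1) ω' = a} ω * φa (h (t + 1) ω)) =
              ind {ω' | X (t + 1) ω' = a} * fun ω => φa (h (t + 1) ω) := rfl
          have hinner2 : (μ[(fun ω => ind {ω' | X (t + 1) ω' = a} ω *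
              φa (h (t + 1) ω))|MeasurableSpace.comap (tup X 0 (t + 1)) inferInstance])
              =ᵐ[μ] fun ω => ind {ω' | X (t + 1) ω' = a} ω * ψa (h t ω, a) := by
            rw [hmul2]
            refine (condExp_mul_of_stronglyMeasurable_left (hind_sm2' a) ?_ hφh_int).trans ?_
            · rw [← hmul2]; exact hindφ_int
            · filter_upwards [hφ2'] with ω hω
              rw [Pi.mul_apply, hω]
              by_cases hXa : X (t + 1) ω = a
              · rw [hXa]
              · have hnot : ω ∉ {ω' | X (t + 1) ω' = a} := hXa
                have hz : ind {ω' | X (t + 1) ω' = a} ω = 0 := by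
                  simp [ind, Set.indicator_of_notMem hnot]
                rw [hz, zero_mul, zero_mul]
          -- now work at level m₂
          have hΨ1 : Measurable[MeasurableSpace.comap (h t) inferInstance]
              fun ω => ψa (h t ω, a) :=
            (hψa_meas.comp (measurable_id.prodMk measurable_const)).comp
              (comap_measurable (h t))
          have hΨbdd : ∀ ω : Ω, |ψa (h t ω, a)| ≤ C := fun ω => hψa_bdd _
          have hΨ2 : StronglyMeasurable[MeasurableSpace.comap (tup X 0 t) inferInstance]
              fun ω => ψa (h t ω, a) :=
            (hΨ1.mono hm12t le_rfl).stronglyMeasurable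
          have hψind_int : Integrable (fun ω => ψa (h t ω, a) *
              ind {ω' | X (t + 1) ω' = a} ω) μ := by
            refine integrable_of_bdd''
              (((hΨ1.mono hm1Ωt le_rfl).mul (hindm a)).aestronglyMeasurable) (C := C) ?_
            intro ω
            rw [abs_mul]
            calc |ψa (h t ω, a)| * |ind {ω' | X (t + 1) ω' = a} ω| ≤ C * 1 :=
                  mul_le_mul (hΨbdd ω) (hindabs _ _) (abs_nonneg _) hC0
              _ = C := mul_one C
          have hind_int : Integrable (ind {ω' | X (t + 1) ω' = a}) μ :=
            integrable_of_bdd'' (hindm a).aestronglyMeasurable fun ω => hindabs _ _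
          have hmul3 : (fun ω => ψa (h t ω, a) * ind {ω' | X (t + 1) ω' = a} ω) =
              (fun ω => ψa (h t ω, a)) * ind {ω' | X (t + 1) ω' = a} := rfl
          refine ⟨fun ω => ψa (h t ω, a), hΨ1, hΨbdd, ?_⟩
          calc (μ[(fun ω => ind {ω' | X (t + 1) ω' = a} ω *
                fa a (tup X (t + 1) m ω))|MeasurableSpace.comap (tup X 0 t) inferInstance])
              =ᵐ[μ] μ[(μ[(fun ω => ind {ω' | X (t + 1) ω' = a} ω * fa a (tup X (t + 1) m ω))|
                  MeasurableSpace.comap (tup X 0 (t + 1)) inferInstance])|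
                  MeasurableSpace.comap (tup X 0 t) inferInstance] :=
                (condExp_condExp_of_le hm22' hm2'Ω).symm
            _ =ᵐ[μ] μ[(fun ω => ind {ω' | X (t + 1) ω' = a} ω * φa (h (t + 1) ω))|
                  MeasurableSpace.comap (tup X 0 t) inferInstance] := condExp_congr_ae hinner1
            _ =ᵐ[μ] μ[(μ[(fun ω => ind {ω' | X (t + 1) ω' = a} ω * φa (h (t + 1) ω))|
                  MeasurableSpace.comap (tup X 0 (t + 1)) inferInstance])|
                  MeasurableSpace.comap (tup X 0 t) inferInstance] :=
                (condExp_condExp_of_le hm22' hm2'Ω).symm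
            _ =ᵐ[μ] μ[(fun ω => ind {ω' | X (t + 1) ω' = a} ω * ψa (h t ω, a))|
                  MeasurableSpace.comap (tup X 0 t) inferInstance] := condExp_congr_ae hinner2
            _ =ᵐ[μ] μ[(fun ω => ψa (h t ω, a) * ind {ω' | X (t + 1) ω' = a} ω)|
                  MeasurableSpace.comap (tup X 0 t) inferInstance] := by
                have hcomm : (fun ω => ind {ω' | X (t + 1) ω' = a} ω * ψa (h t ω, a)) =
                    fun ω => ψa (h t ω, a) * ind {ω' | X (t + 1) ω' = a} ω := by
                  funext ω; exact mul_comm _ _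
                rw [hcomm]
            _ =ᵐ[μ] (fun ω => ψa (h t ω, a)) *
                  μ[ind {ω' | X (t + 1) ω' = a}|
                    MeasurableSpace.comap (tup X 0 t) inferInstance] := by
                rw [hmul3]
                exact condExp_mul_of_stronglyMeasurable_left hΨ2 (by rw [← hmul3]; exact hψind_int)
                  hind_int
            _ =ᵐ[μ] fun ω => ψa (h t ω, a) *
                  (μ[ind {ω' | X (t + 1) ω' = a}|
                    MeasurableSpace.comap (h t) inferInstance]) ω := by
                filter_upwards [(hnext t h1 ht1T a).symm] with ω hω
                rw [Pi.mul_apply, hω]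
        choose Ψ hΨmeas hΨbdd hΨeq using hstep
        set G : Ω → ℝ := fun ω => ∑ a : 𝒳, Ψ a ω *
          (μ[ind {ω' | X (t + 1) ω' = a}|MeasurableSpace.comap (h t) inferInstance]) ω with hG
        have hGsum : (∑ a : 𝒳, fun ω => Ψ a ω *
            (μ[ind {ω' | X (t + 1) ω' = a}|MeasurableSpace.comap (h t) inferInstance]) ω) = G := by
          funext ω
          rw [hG, Finset.sum_apply]
        have hG2 : (μ[fun ω => f (tup X t (m + 1) ω)|
            MeasurableSpace.comap (tup X 0 t) inferInstance]) =ᵐ[μ] G := by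
          rw [hFeq, ← hGsum]
          refine (condExp_finsetSum (fun a _ => hprodint a) _).trans ?_
          exact ae_finset_sum_congr _ fun a => hΨeq a
        have hGsm : StronglyMeasurable[MeasurableSpace.comap (h t) inferInstance] G := by
          rw [hG]
          refine Measurable.stronglyMeasurable ?_
          refine Finset.measurable_sum _ fun a _ => ?_
          exact (hΨmeas a).mul stronglyMeasurable_condExp.measurable
        have hGint : Integrable G μ := by
          rw [hG]
          refine integrable_finset_sum _ fun a _ => ?_
          refine Integrable.bdd_mul (c := C) integrable_condExp
            ((hΨmeas a).mono hm1Ωt le_rfl).aestronglyMeasurable (Eventually.of_forall fun ω => ?_)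
          rw [Real.norm_eq_abs]
          exact hΨbdd a ω
        calc (μ[fun ω => f (tup X t (m + 1) ω)|MeasurableSpace.comap (h t) inferInstance])
            =ᵐ[μ] μ[(μ[fun ω => f (tup X t (m + 1) ω)|
                MeasurableSpace.comap (tup X 0 t) inferInstance])|
                MeasurableSpace.comap (h t) inferInstance] :=
              (condExp_condExp_of_le hm12t hm2Ω).symm
          _ =ᵐ[μ] μ[G|MeasurableSpace.comap (h t) inferInstance] := condExp_congr_ae hG2
          _ =ᵐ[μ] G := by
              rw [condExp_of_stronglyMeasurable hm1Ωt hGsm hGint]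
          _ =ᵐ[μ] μ[fun ω => f (tup X t (m + 1) ω)|
                MeasurableSpace.comap (tup X 0 t) inferInstance] := hG2.symm
  intro t ht1 ht2 f hfm hfbdd
  obtain ⟨C, hC⟩ := hfbdd
  exact key (T - t) t ht1 (by omega) f hfm C hC
end
end

section
/- Let k ≥ 1 and let t satisfy 1 ≤ t and t + k ≤ T. Assume the system is k-observable at time t, and assume that for every w ∈ 𝒳^k, μ[X_{t+1:t+k} = w ∣ σ(h_t)] = μ[X_{t+1:t+k} = w ∣ σ(X_{1:t})] μ-almost surely (i.e., the model conditioned on h_t recovers the true joint conditional distribution of the next k tokens). Then h_t is a belief state for X_{1:t}. -/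
open MeasureTheory ProbabilityTheory

noncomputable section

section Aux
local notation "comap" => MeasurableSpace.comap

namespace BeliefAux

variable {Ω : Type*} [MeasurableSpace Ω] {μ : Measure Ω}

/-- conditional value of `F` on the atom `{Y = s}` -/
def cv (μ : Measure Ω) {S : Type*} (Y : Ω → S) (F : Ω → ℝ) (s : S) : ℝ :=
  ∫ ω, F ω ∂(μ[|{ω' | Y ω' = s}])

lemma cv_eq {S : Type*} (Y : Ω → S) (F : Ω → ℝ) (s : S) :
    cv μ Y F s = ((μ {ω' | Y ω' = s})⁻¹).toReal • ∫ ω in {ω' | Y ω' = s}, F ω ∂μ := by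
  rw [cv, ProbabilityTheory.cond, integral_smul_measure]

lemma atom_setIntegral [IsFiniteMeasure μ] {S : Type*} [MeasurableSpace S]
    [MeasurableSingletonClass S] {Y : Ω → S} (hY : Measurable Y) (F : Ω → ℝ) (s : S) :
    ∫ ω in {ω' | Y ω' = s}, cv μ Y F (Y ω) ∂μ = ∫ ω in {ω' | Y ω' = s}, F ω ∂μ := by
  have hA : MeasurableSet {ω' | Y ω' = s} := hY (measurableSet_singleton s)
  have h1 : ∀ ω ∈ {ω' | Y ω' = s}, cv μ Y F (Y ω) = cv μ Y F s := by
    intro ω hω; rw [Set.mem_setOf_eq] at hω; rw [hω]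
  rw [setIntegral_congr_fun hA h1, setIntegral_const]
  rcases eq_or_ne (μ {ω' | Y ω' = s}) 0 with h0 | h0
  · rw [Measure.restrict_eq_zero.mpr h0, integral_zero_measure, Measure.real, h0]
    simp
  · rw [cv_eq, smul_smul, ENNReal.toReal_inv, Measure.real, mul_inv_cancel₀, one_smul]
    exact ENNReal.toReal_ne_zero.mpr ⟨h0, measure_ne_top μ _⟩

lemma integrable_cv_comp [IsFiniteMeasure μ] {S : Type*} [MeasurableSpace S] [Finite S]
    [DiscreteMeasurableSpace S] {Y : Ω → S} (hY : Measurable Y) (F : Ω → ℝ) :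
    Integrable (fun ω => cv μ Y F (Y ω)) μ := by
  have h1 : Integrable (cv μ Y F) (Measure.map Y μ) := .of_finite
  exact (integrable_map_measure (Measurable.of_discrete.aestronglyMeasurable)
    hY.aemeasurable).mp h1

lemma setIntegral_comap [IsFiniteMeasure μ] {S : Type*} [MeasurableSpace S] [Fintype S]
    [DiscreteMeasurableSpace S]
    {Y : Ω → S} (hY : Measurable Y) {F : Ω → ℝ} (hF : Integrable F μ)
    {s : Set Ω} (hs : MeasurableSet[comap Y inferInstance] s) :
    ∫ ω in s, cv μ Y F (Y ω) ∂μ = ∫ ω in s, F ω ∂μ := by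
  classical
  obtain ⟨B, hB, rfl⟩ := hs
  have hdecomp : Y ⁻¹' B = ⋃ b ∈ B.toFinite.toFinset, {ω | Y ω = b} := by
    ext ω; simp only [Set.mem_preimage, Set.mem_iUnion, Set.Finite.mem_toFinset,
      Set.mem_setOf_eq]
    exact ⟨fun hb => ⟨Y ω, hb, rfl⟩, fun ⟨b, hb, he⟩ => he ▸ hb⟩
  have hmeas : ∀ b ∈ B.toFinite.toFinset, MeasurableSet {ω | Y ω = b} :=
    fun b _ => hY (measurableSet_singleton b)
  have hdisj : (B.toFinite.toFinset : Set S).Pairwise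
      (Function.onFun Disjoint fun b => {ω | Y ω = b}) := by
    intro b _ b' _ hbb'
    simp only [Function.onFun, Set.disjoint_left]
    intro ω h1 h2
    exact hbb' (h1.symm.trans h2)
  rw [hdecomp,
    integral_biUnion_finset _ hmeas hdisj (fun b _ => (integrable_cv_comp hY F).integrableOn),
    integral_biUnion_finset _ hmeas hdisj (fun b _ => hF.integrableOn)]
  exact Finset.sum_congr rfl fun b _ => atom_setIntegral hY F b

lemma condexp_comap_eq [IsProbabilityMeasure μ] {S : Type*} [MeasurableSpace S] [Fintype S]
    [DiscreteMeasurableSpace S]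
    {Y : Ω → S} (hY : Measurable Y) {F : Ω → ℝ} (hF : Integrable F μ) :
    μ[F | comap Y inferInstance] =ᵐ[μ] fun ω => cv μ Y F (Y ω) := by
  have hm : comap Y inferInstance ≤ ‹MeasurableSpace Ω› := hY.comap_le
  have hYc : Measurable[comap Y inferInstance] Y := fun s hs => ⟨s, hs, rfl⟩
  refine (ae_eq_condExp_of_forall_setIntegral_eq hm hF
    (fun s _ _ => (integrable_cv_comp hY F).integrableOn)
    (fun s hs _ => setIntegral_comap hY hF hs) ?_).symm
  exact (((Measurable.of_discrete (f := cv μ Y F)).comp hYc).stronglyMeasurable).aestronglyMeasurable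

omit [MeasurableSpace Ω] in
lemma eq_of_comap_fiber {H : Type*} [MeasurableSpace H] {h : Ω → H} {F : Ω → ℝ}
    (hF : StronglyMeasurable[comap h inferInstance] F) {ω ω' : Ω} (he : h ω = h ω') :
    F ω = F ω' := by
  obtain ⟨B, -, hBe⟩ := hF.measurable (measurableSet_singleton (F ω))
  have hω : ω ∈ F ⁻¹' {F ω} := rfl
  rw [← hBe] at hω
  have hω' : ω' ∈ h ⁻¹' B := by rwa [Set.mem_preimage, ← he]
  rw [hBe] at hω'
  exact (hω'.out).symm

lemma integral_comp_fintype {S : Type*} [MeasurableSpace S] [Fintype S]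
    [DiscreteMeasurableSpace S]
    (ν : Measure Ω) [IsFiniteMeasure ν] {Z : Ω → S} (hZ : Measurable Z) (f : S → ℝ) :
    ∫ ω, f (Z ω) ∂ν = ∑ s : S, (ν {ω | Z ω = s}).toReal * f s := by
  classical
  have h1 : (fun ω => f (Z ω))
      = fun ω => ∑ s : S, Set.indicator {ω' | Z ω' = s} (fun _ => f s) ω := by
    funext ω
    rw [Finset.sum_eq_single (Z ω)]
    · simp [Set.indicator_of_mem, Set.mem_setOf_eq]
    · intro s _ hs
      exact Set.indicator_of_notMem (fun hmem => hs (Eq.symm hmem)) _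
    · simp
  rw [h1, integral_finset_sum]
  · refine Finset.sum_congr rfl fun s _ => ?_
    have hms : MeasurableSet {ω' | Z ω' = s} := hZ (measurableSet_singleton s)
    rw [integral_indicator_const _ hms, smul_eq_mul, mul_comm]
    exact mul_comm _ _
  · intro s _
    exact (integrable_const _).indicator (hZ (measurableSet_singleton s))

end BeliefAux
end Aux

/-- If the system is `k`-observable at time `t` and the model conditioned
on `h t` recovers the true joint conditional distribution of the next `k` tokens, then
`h t` is a belief state for `X_{1:t}`. -/
theorem jtp_belief_states_k_observable
    {Ω 𝒳 H : Type*}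
    [MeasurableSpace Ω] [MeasurableSpace 𝒳] [DiscreteMeasurableSpace 𝒳]
    [Fintype 𝒳] [Nonempty 𝒳]
    [MeasurableSpace H] [StandardBorelSpace H]
    (μ : Measure Ω) [IsProbabilityMeasure μ]
    (T : ℕ) (hT : 2 ≤ T)
    (X : ℕ → Ω → 𝒳) (hX : ∀ t, Measurable (X t))
    (h : ℕ → Ω → H) (g : (t : ℕ) → (Fin t → 𝒳) → H)
    (hg : ∀ t, 1 ≤ t → t ≤ T → Measurable (g t))
    (hgh : ∀ t, 1 ≤ t → t ≤ T → ∀ ω, h t ω = g t (tup X 0 t ω))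
    (k : ℕ) (hk : 1 ≤ k) (t : ℕ) (ht1 : 1 ≤ t) (htk : t + k ≤ T)
    -- the system is `k`-observable at time `t`
    (hobs : ∀ x x' : Fin t → 𝒳,
      0 < μ {ω | tup X 0 t ω = x} → 0 < μ {ω | tup X 0 t ω = x'} →
      (∀ w : Fin k → 𝒳,
        ProbabilityTheory.cond μ {ω | tup X 0 t ω = x} {ω | tup X t k ω = w} =
        ProbabilityTheory.cond μ {ω | tup X 0 t ω = x'} {ω | tup X t k ω = w}) →
      ∀ w' : Fin (T - t) → 𝒳,
        ProbabilityTheory.cond μ {ω | tup X 0 t ω = x} {ω | tup X t (T - t) ω = w'} =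
        ProbabilityTheory.cond μ {ω | tup X 0 t ω = x'} {ω | tup X t (T - t) ω = w'})
    -- conditioning on `h t` recovers the true joint next-`k` conditional
    (hjtp : ∀ w : Fin k → 𝒳,
      (μ[ind {ω | tup X t k ω = w} | MeasurableSpace.comap (h t) inferInstance])
        =ᵐ[μ]
      (μ[ind {ω | tup X t k ω = w} | MeasurableSpace.comap (tup X 0 t) inferInstance])) :
    -- conclusion: `h t` is a belief state for `X_{1:t}`
    ∀ f : (Fin (T - t) → 𝒳) → ℝ, Measurable f → (∃ C, ∀ y, |f y| ≤ C) →
      (μ[fun ω => f (tup X t (T - t) ω) | MeasurableSpace.comap (h t) inferInstance])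
        =ᵐ[μ]
      (μ[fun ω => f (tup X t (T - t) ω) |
          MeasurableSpace.comap (tup X 0 t) inferInstance]) := by
  classical
  intro f hf hfb
  obtain ⟨C, hC⟩ := hfb
  set Y := tup X 0 t with hYdef
  have hY : Measurable Y := measurable_pi_lambda _ (fun i => hX _)
  have hfut : Measurable (tup X t (T - t)) := measurable_pi_lambda _ (fun i => hX _)
  have hkm : Measurable (tup X t k) := measurable_pi_lambda _ (fun i => hX _)
  set F := fun ω => f (tup X t (T - t) ω) with hFdef
  have hFmeas : Measurable F := hf.comp hfut
  have hFint : Integrable F μ := by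
    refine Integrable.mono' (integrable_const C) hFmeas.aestronglyMeasurable ?_
    filter_upwards with ω
    simpa [Real.norm_eq_abs] using hC _
  have htT : t ≤ T := le_trans (Nat.le_add_right t k) htk
  have hhg : h t = fun ω => g t (Y ω) := funext (hgh t ht1 htT)
  have hm0le : MeasurableSpace.comap Y inferInstance ≤ ‹MeasurableSpace Ω› := hY.comap_le
  have hmh0 : MeasurableSpace.comap (h t) inferInstance
      ≤ MeasurableSpace.comap Y inferInstance := by
    rw [hhg]
    have heq : (fun ω => g t (Y ω)) = (g t) ∘ Y := rfl
    rw [heq, ← MeasurableSpace.comap_comp]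
    exact MeasurableSpace.comap_mono ((measurable_iff_comap_le).mp (hg t ht1 htT))
  have hmhle : MeasurableSpace.comap (h t) inferInstance ≤ ‹MeasurableSpace Ω› :=
    hmh0.trans hm0le
  -- integrability of the `ind` functions
  have hiw : ∀ w : Fin k → 𝒳, Integrable (ind {ω | tup X t k ω = w}) μ := by
    intro w
    exact (integrable_const (1:ℝ)).indicator (hkm (measurableSet_singleton w))
  -- a.e. identification of the conditional probabilities
  have hD : ∀ᵐ ω ∂μ, ∀ w : Fin k → 𝒳,
      (μ[ind {ω | tup X t k ω = w} | MeasurableSpace.comap (h t) inferInstance]) ω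
        = BeliefAux.cv μ Y (ind {ω | tup X t k ω = w}) (Y ω) := by
    rw [ae_all_iff]
    intro w
    exact (hjtp w).trans (BeliefAux.condexp_comap_eq hY (hiw w))
  -- cv of indicator = cond measure value
  have htoReal : ∀ (x0 : Fin t → 𝒳) (w : Fin k → 𝒳),
      BeliefAux.cv μ Y (ind {ω | tup X t k ω = w}) x0
        = ((μ[|{ω | Y ω = x0}]) {ω | tup X t k ω = w}).toReal := by
    intro x0 w
    exact integral_indicator_one (hkm (measurableSet_singleton w))
  -- the key transfer lemma
  have key : ∀ x x' : Fin t → 𝒳, μ {ω | Y ω = x} ≠ 0 → μ {ω | Y ω = x'} ≠ 0 →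
      g t x = g t x' → BeliefAux.cv μ Y F x = BeliefAux.cv μ Y F x' := by
    intro x x' hx hx' hgxx'
    have hNc : μ ({ω | ∀ w : Fin k → 𝒳,
        (μ[ind {ω | tup X t k ω = w} | MeasurableSpace.comap (h t) inferInstance]) ω
          = BeliefAux.cv μ Y (ind {ω | tup X t k ω = w}) (Y ω)}ᶜ) = 0 := by
      rw [Set.compl_setOf]
      exact ae_iff.mp hD
    have hmx : μ ({ω | Y ω = x} ∩ {ω | ∀ w : Fin k → 𝒳,
        (μ[ind {ω | tup X t k ω = w} | MeasurableSpace.comap (h t) inferInstance]) ω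
          = BeliefAux.cv μ Y (ind {ω | tup X t k ω = w}) (Y ω)}) = μ {ω | Y ω = x} :=
      measure_inter_conull hNc
    have hmx' : μ ({ω | Y ω = x'} ∩ {ω | ∀ w : Fin k → 𝒳,
        (μ[ind {ω | tup X t k ω = w} | MeasurableSpace.comap (h t) inferInstance]) ω
          = BeliefAux.cv μ Y (ind {ω | tup X t k ω = w}) (Y ω)}) = μ {ω | Y ω = x'} :=
      measure_inter_conull hNc
    obtain ⟨ω, hωx, hωP⟩ := nonempty_of_measure_ne_zero (hmx ▸ hx)
    obtain ⟨ω', hωx', hωP'⟩ := nonempty_of_measure_ne_zero (hmx' ▸ hx')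
    have hhωω' : h t ω = h t ω' := by
      rw [hhg]
      simp only
      rw [Set.mem_setOf_eq] at hωx hωx'
      rw [hωx, hωx', hgxx']
    have hcond : ∀ w : Fin k → 𝒳,
        (μ[|{ω | Y ω = x}]) {ω | tup X t k ω = w}
          = (μ[|{ω | Y ω = x'}]) {ω | tup X t k ω = w} := by
      intro w
      haveI h1 : IsProbabilityMeasure (μ[|{ω | Y ω = x}]) :=
        ProbabilityTheory.cond_isProbabilityMeasure hx
      haveI h2 : IsProbabilityMeasure (μ[|{ω | Y ω = x'}]) :=
        ProbabilityTheory.cond_isProbabilityMeasure hx'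
      refine (ENNReal.toReal_eq_toReal_iff' (measure_ne_top _ _) (measure_ne_top _ _)).mp ?_
      rw [← htoReal, ← htoReal]
      rw [Set.mem_setOf_eq] at hωx hωx'
      calc BeliefAux.cv μ Y (ind {ω | tup X t k ω = w}) x
          = BeliefAux.cv μ Y (ind {ω | tup X t k ω = w}) (Y ω) := by rw [hωx]
        _ = (μ[ind {ω | tup X t k ω = w} | MeasurableSpace.comap (h t) inferInstance]) ω := (hωP w).symm
        _ = (μ[ind {ω | tup X t k ω = w} | MeasurableSpace.comap (h t) inferInstance]) ω' :=
            BeliefAux.eq_of_comap_fiber stronglyMeasurable_condExp hhωω'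
        _ = BeliefAux.cv μ Y (ind {ω | tup X t k ω = w}) (Y ω') := hωP' w
        _ = BeliefAux.cv μ Y (ind {ω | tup X t k ω = w}) x' := by rw [hωx']
    have hfull := hobs x x' (pos_iff_ne_zero.mpr hx) (pos_iff_ne_zero.mpr hx') hcond
    haveI h1 : IsProbabilityMeasure (μ[|{ω | Y ω = x}]) :=
      ProbabilityTheory.cond_isProbabilityMeasure hx
    haveI h2 : IsProbabilityMeasure (μ[|{ω | Y ω = x'}]) :=
      ProbabilityTheory.cond_isProbabilityMeasure hx'
    show (∫ ω, F ω ∂(μ[|{ω' | Y ω' = x}])) = ∫ ω, F ω ∂(μ[|{ω' | Y ω' = x'}])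
    rw [hFdef]
    rw [BeliefAux.integral_comp_fintype _ hfut f, BeliefAux.integral_comp_fintype _ hfut f]
    exact Finset.sum_congr rfl fun w' _ => by rw [hfull w']
  -- conditional expectation over `mh` equals `cv ∘ Y`
  have hG : (fun ω => BeliefAux.cv μ Y F (Y ω)) =ᵐ[μ] μ[F | MeasurableSpace.comap (h t) inferInstance] := by
    refine ae_eq_condExp_of_forall_setIntegral_eq hmhle hFint
      (fun s _ _ => (BeliefAux.integrable_cv_comp hY F).integrableOn)
      (fun s hs _ => BeliefAux.setIntegral_comap hY hFint (hmh0 s hs)) ?_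
    set ψ : H → ℝ := fun v => if hv : ∃ x, μ {ω | Y ω = x} ≠ 0 ∧ g t x = v then
        BeliefAux.cv μ Y F hv.choose else 0 with hψdef
    refine ⟨fun ω => ψ (h t ω), ?_, ?_⟩
    · refine Measurable.stronglyMeasurable ?_
      intro B hB
      refine ⟨ψ ⁻¹' B ∩ Set.range (g t), ?_, ?_⟩
      · exact ((Set.finite_range (g t)).inter_of_right _).measurableSet
      · ext ω
        simp only [Set.mem_preimage, Set.mem_inter_iff, Set.mem_range]
        exact ⟨fun hp => hp.1, fun hp => ⟨hp, ⟨Y ω, (hgh t ht1 htT ω).symm⟩⟩⟩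
    · have hN : μ (⋃ x ∈ {x : Fin t → 𝒳 | μ {ω | Y ω = x} = 0}, {ω | Y ω = x}) = 0 :=
        (measure_biUnion_null_iff (Set.to_countable _)).mpr fun x hx => hx
      have hae : ∀ᵐ ω ∂μ, ω ∉ ⋃ x ∈ {x : Fin t → 𝒳 | μ {ω | Y ω = x} = 0}, {ω | Y ω = x} :=
        measure_eq_zero_iff_ae_notMem.mp hN
      filter_upwards [hae] with ω hω
      have hx : μ {ω' | Y ω' = Y ω} ≠ 0 := by
        intro h0
        exact hω (Set.mem_biUnion h0 rfl)
      have hex : ∃ x, μ {ω' | Y ω' = x} ≠ 0 ∧ g t x = h t ω :=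
        ⟨Y ω, hx, (hgh t ht1 htT ω).symm⟩
      show BeliefAux.cv μ Y F (Y ω) = ψ (h t ω)
      rw [hψdef]
      simp only [dif_pos hex]
      exact (key _ _ hex.choose_spec.1 hx (by rw [hex.choose_spec.2, hhg])).symm
  have hG0 : μ[F | MeasurableSpace.comap Y inferInstance] =ᵐ[μ] fun ω => BeliefAux.cv μ Y F (Y ω) :=
    BeliefAux.condexp_comap_eq hY hFint
  exact hG.symm.trans hG0.symm
end
end

section
/- Fix k with 1 ≤ k ≤ T−2. If h_{k+1} is a belief state for X_{1:k+1} and transition consistency holds at time k, then for every bounded measurable f : 𝒳^{T−k−1} → ℝ, E[f(X_{k+2:T}) ∣ σ(h_k, X_{k+1})] = E[f(X_{k+2:T}) ∣ σ(X_{1:k+1})] μ-almost surely. -/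
open MeasureTheory ProbabilityTheory

noncomputable section

theorem measurable_tup {Ω 𝒳 : Type*} [MeasurableSpace Ω] [MeasurableSpace 𝒳]
    (X : ℕ → Ω → 𝒳) (hX : ∀ t, Measurable (X t)) (s n : ℕ) :
    Measurable (tup X s n) :=
  measurable_pi_lambda _ fun _ => hX _

/-- Fix `1 ≤ k ≤ T-2`. If `h (k+1)` is a belief state for `X_{1:k+1}` and
transition consistency holds at time `k`, then for every bounded measurable
`f : 𝒳^{T-k-1} → ℝ`, `E[f(X_{k+2:T}) ∣ σ(h_k, X_{k+1})] = E[f(X_{k+2:T}) ∣ σ(X_{1:k+1})]`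
μ-a.s. -/
theorem transition_consistency_middle_step
    {Ω 𝒳 H : Type*}
    [MeasurableSpace Ω] [MeasurableSpace 𝒳] [DiscreteMeasurableSpace 𝒳]
    [Fintype 𝒳] [Nonempty 𝒳]
    [MeasurableSpace H] [StandardBorelSpace H]
    (μ : Measure Ω) [IsProbabilityMeasure μ]
    (T : ℕ) (hT : 2 ≤ T)
    (X : ℕ → Ω → 𝒳) (hX : ∀ t, Measurable (X t))
    (h : ℕ → Ω → H) (g : (t : ℕ) → (Fin t → 𝒳) → H)
    (hg : ∀ t, 1 ≤ t → t ≤ T → Measurable (g t))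
    (hgh : ∀ t, 1 ≤ t → t ≤ T → ∀ ω, h t ω = g t (tup X 0 t ω))
    (k : ℕ) (hk1 : 1 ≤ k) (hk2 : k ≤ T - 2)
    -- `h (k+1)` is a belief state for `X_{1:k+1}`
    (hIH : ∀ f : (Fin (T - (k + 1)) → 𝒳) → ℝ, Measurable f → (∃ C, ∀ y, |f y| ≤ C) →
      (μ[fun ω => f (tup X (k + 1) (T - (k + 1)) ω) |
          MeasurableSpace.comap (h (k + 1)) inferInstance])
        =ᵐ[μ]
      (μ[fun ω => f (tup X (k + 1) (T - (k + 1)) ω) |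
          MeasurableSpace.comap (tup X 0 (k + 1)) inferInstance]))
    -- transition consistency at time `k`
    (htrans : ∀ B : Set H, MeasurableSet B →
      (μ[ind {ω | h (k + 1) ω ∈ B} |
          MeasurableSpace.comap (fun ω => (h k ω, X (k + 1) ω)) inferInstance])
        =ᵐ[μ]
      (μ[ind {ω | h (k + 1) ω ∈ B} |
          MeasurableSpace.comap (tup X 0 (k + 1)) inferInstance])) :
    -- conclusion
    ∀ f : (Fin (T - (k + 1)) → 𝒳) → ℝ, Measurable f → (∃ C, ∀ y, |f y| ≤ C) →
      (μ[fun ω => f (tup X (k + 1) (T - (k + 1)) ω) |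
          MeasurableSpace.comap (fun ω => (h k ω, X (k + 1) ω)) inferInstance])
        =ᵐ[μ]
      (μ[fun ω => f (tup X (k + 1) (T - (k + 1)) ω) |
          MeasurableSpace.comap (tup X 0 (k + 1)) inferInstance]) := by
  classical
  intro f hf hfbd
  have hkT : k + 2 ≤ T := by omega
  obtain ⟨C, hC⟩ := hfbd
  -- notation (functions only, not σ-algebras)
  let Z : Ω → ℝ := fun ω => f (tup X (k + 1) (T - (k + 1)) ω)
  let K : Ω → H := h (k + 1)
  let G : Ω → H × 𝒳 := fun ω => (h k ω, X (k + 1) ω)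
  let F : Ω → (Fin (k + 1) → 𝒳) := tup X 0 (k + 1)
  show μ[Z | MeasurableSpace.comap G inferInstance]
      =ᵐ[μ] μ[Z | MeasurableSpace.comap F inferInstance]
  have hFmeas : Measurable F := measurable_tup X hX 0 (k + 1)
  have hmF_le : MeasurableSpace.comap F inferInstance ≤ ‹MeasurableSpace Ω› :=
    hFmeas.comap_le
  have hKF : ∀ ω, K ω = g (k + 1) (F ω) := fun ω => hgh (k + 1) (by omega) (by omega) ω
  have hKmeas : Measurable K := by
    have : K = fun ω => g (k + 1) (F ω) := funext hKF
    rw [this]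
    exact (hg (k + 1) (by omega) (by omega)).comp hFmeas
  -- σ(G) ≤ σ(F)
  have hGF : ∀ ω, G ω = (fun x : Fin (k + 1) → 𝒳 =>
      (g k (fun i : Fin k => x i.castSucc), x (Fin.last k))) (F ω) := by
    intro ω
    have h1 : h k ω = g k (fun i : Fin k => F ω i.castSucc) := by
      rw [hgh k hk1 (by omega) ω]
      congr 1
    have h2 : X (k + 1) ω = F ω (Fin.last k) := by
      show X (k + 1) ω = X (0 + 1 + k) ω
      congr 1
      omega
    simp only [G, h1, h2]
  have hmG_le_mF : MeasurableSpace.comap G inferInstance ≤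
      MeasurableSpace.comap F inferInstance := by
    intro s hs
    obtain ⟨B, hB, rfl⟩ := hs
    refine ⟨(fun x : Fin (k + 1) → 𝒳 =>
      (g k (fun i : Fin k => x i.castSucc), x (Fin.last k))) ⁻¹' B,
      (measurable_of_countable _) hB, ?_⟩
    ext ω
    simp only [Set.mem_preimage]
    rw [hGF ω]
  have hmG_le : MeasurableSpace.comap G inferInstance ≤ ‹MeasurableSpace Ω› :=
    hmG_le_mF.trans hmF_le
  -- σ(K) ≤ σ(F)
  have hmK_le_mF : MeasurableSpace.comap K inferInstance ≤
      MeasurableSpace.comap F inferInstance := by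
    intro s hs
    obtain ⟨B, hB, rfl⟩ := hs
    refine ⟨g (k + 1) ⁻¹' B, hg (k + 1) (by omega) (by omega) hB, ?_⟩
    ext ω
    simp only [Set.mem_preimage]
    rw [← hKF ω]
  -- Z is integrable
  have hZmeas : Measurable Z := hf.comp (measurable_tup X hX _ _)
  have hZint : Integrable Z μ := by
    refine (integrable_const C).mono' hZmeas.aestronglyMeasurable ?_
    exact Filter.Eventually.of_forall fun ω => by simpa [Real.norm_eq_abs] using hC _
  -- the conditional expectation given h (k+1)
  let W : Ω → ℝ := μ[Z | MeasurableSpace.comap K inferInstance]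
  have hWsm : StronglyMeasurable[MeasurableSpace.comap K inferInstance] W :=
    stronglyMeasurable_condExp
  have hWconst : ∀ ω ω', K ω = K ω' → W ω = W ω' := by
    intro ω ω' hωω'
    have hmeas : MeasurableSet[MeasurableSpace.comap K inferInstance] (W ⁻¹' {W ω}) :=
      hWsm.measurable (measurableSet_singleton _)
    obtain ⟨B, -, hB⟩ := hmeas
    have hω : ω ∈ K ⁻¹' B := by rw [hB]; exact rfl
    have hω' : ω' ∈ K ⁻¹' B := by
      simp only [Set.mem_preimage] at hω ⊢; rw [← hωω']; exact hω
    rw [hB] at hω'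
    exact (Set.mem_singleton_iff.1 hω').symm
  -- factor W through K (only needed pointwise)
  let ψ : H → ℝ := fun s => if hs : ∃ ω, K ω = s then W hs.choose else 0
  have hψK : ∀ ω, ψ (K ω) = W ω := by
    intro ω
    have hs : ∃ ω', K ω' = K ω := ⟨ω, rfl⟩
    simp only [ψ, dif_pos hs]
    exact hWconst _ _ hs.choose_spec
  -- the finite set of possible values of K
  let S : Finset H := Finset.image (g (k + 1)) Finset.univ
  have hKS : ∀ ω, K ω ∈ S := by
    intro ω
    rw [hKF ω]
    exact Finset.mem_image_of_mem _ (Finset.mem_univ _)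
  -- decompose W as a finite sum of indicators
  have hWsum : W = ∑ s ∈ S, ψ s • ind {ω' | K ω' ∈ ({s} : Set H)} := by
    funext ω
    rw [Finset.sum_apply, Finset.sum_eq_single_of_mem (K ω) (hKS ω)]
    · simp [ind, Set.indicator, hψK ω]
    · intro s _ hs
      have hmem : ω ∉ {ω' | K ω' ∈ ({s} : Set H)} := by simp [hs.symm]
      show ψ s • ind {ω' | K ω' ∈ ({s} : Set H)} ω = 0
      rw [ind, Set.indicator_of_notMem hmem, smul_zero]
  -- each indicator is integrable
  have hindint : ∀ s : H, Integrable (ind {ω' | K ω' ∈ ({s} : Set H)}) μ := by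
    intro s
    have hA : MeasurableSet {ω' | K ω' ∈ ({s} : Set H)} :=
      hKmeas (measurableSet_singleton s)
    exact (integrable_const (1 : ℝ)).indicator hA
  -- conditional expectation of W given a sub-σ-algebra m is a sum of cond-exps
  have hcondW : ∀ m : MeasurableSpace Ω,
      μ[W | m] =ᵐ[μ] fun ω =>
        ∑ s ∈ S, ψ s • (μ[ind {ω' | K ω' ∈ ({s} : Set H)} | m]) ω := by
    intro m
    rw [hWsum]
    have h2 := condExp_finset_sum
      (f := fun s => ψ s • ind {ω' | K ω' ∈ ({s} : Set H)}) (s := S) (m := m) (μ := μ)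
      (fun s _ => (hindint s).smul (ψ s))
    refine h2.trans ?_
    have h4 : ∀ᵐ ω ∂μ, ∀ s ∈ S, (μ[ψ s • ind {ω' | K ω' ∈ ({s} : Set H)} | m]) ω =
        (ψ s • μ[ind {ω' | K ω' ∈ ({s} : Set H)} | m]) ω :=
      (ae_ball_iff S.countable_toSet).2 fun s _ => condExp_smul (ψ s) _ m
    filter_upwards [h4] with ω hω
    rw [Finset.sum_apply]
    exact Finset.sum_congr rfl fun s hs => hω s hs
  -- the main chain
  have step2 : (μ[Z | MeasurableSpace.comap F inferInstance]) =ᵐ[μ] W :=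
    (hIH f hf ⟨C, hC⟩).symm
  have step5 : (fun ω => ∑ s ∈ S, ψ s •
        (μ[ind {ω' | K ω' ∈ ({s} : Set H)} | MeasurableSpace.comap G inferInstance]) ω)
      =ᵐ[μ] fun ω => ∑ s ∈ S, ψ s •
        (μ[ind {ω' | K ω' ∈ ({s} : Set H)} | MeasurableSpace.comap F inferInstance]) ω := by
    have h4 : ∀ᵐ ω ∂μ, ∀ s ∈ S,
        (μ[ind {ω' | K ω' ∈ ({s} : Set H)} | MeasurableSpace.comap G inferInstance]) ω =
        (μ[ind {ω' | K ω' ∈ ({s} : Set H)} | MeasurableSpace.comap F inferInstance]) ω :=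
      (ae_ball_iff S.countable_toSet).2 fun s _ => htrans {s} (measurableSet_singleton s)
    filter_upwards [h4] with ω hω
    exact Finset.sum_congr rfl fun s hs => by rw [hω s hs]
  have step7 : (μ[W | MeasurableSpace.comap F inferInstance])
      =ᵐ[μ] μ[Z | MeasurableSpace.comap F inferInstance] := by
    have hWsmF : StronglyMeasurable[MeasurableSpace.comap F inferInstance] W :=
      hWsm.mono hmK_le_mF
    rw [condExp_of_stronglyMeasurable hmF_le hWsmF integrable_condExp]
    exact step2.symm
  calc μ[Z | MeasurableSpace.comap G inferInstance]
      =ᵐ[μ] μ[μ[Z | MeasurableSpace.comap F inferInstance] |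
        MeasurableSpace.comap G inferInstance] :=
        (condExp_condExp_of_le hmG_le_mF hmF_le).symm
    _ =ᵐ[μ] μ[W | MeasurableSpace.comap G inferInstance] := condExp_congr_ae step2
    _ =ᵐ[μ] _ := hcondW _
    _ =ᵐ[μ] _ := step5
    _ =ᵐ[μ] μ[W | MeasurableSpace.comap F inferInstance] := (hcondW _).symm
    _ =ᵐ[μ] μ[Z | MeasurableSpace.comap F inferInstance] := step7
end
end

section
/- Fix k with 1 ≤ k ≤ T−2. Suppose that for every bounded measurable f : 𝒳^{T−k−1} → ℝ, E[f(X_{k+2:T}) ∣ σ(h_k, X_{k+1})] = E[f(X_{k+2:T}) ∣ σ(X_{1:k+1})] μ-almost surely, and suppose next-token consistency holds at time k. Then h_k is a belief state for X_{1:k}. -/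
open MeasureTheory ProbabilityTheory

noncomputable section

open Filter

/-- Doob–Dynkin-type factorization for real-valued functions that are strongly measurable
with respect to a comap σ-algebra. -/
theorem exists_factor_of_stronglyMeasurable_comap {Ω β : Type*} [MeasurableSpace β]
    (g : Ω → β) (y : Ω → ℝ)
    (hy : StronglyMeasurable[MeasurableSpace.comap g inferInstance] y) :
    ∃ φ : β → ℝ, Measurable φ ∧ ∀ ω, y ω = φ (g ω) := by
  letI m : MeasurableSpace Ω := MeasurableSpace.comap g inferInstance
  have main : ∀ s : @SimpleFunc Ω m ℝ, ∃ ψ : β → ℝ, Measurable ψ ∧ ∀ ω, s ω = ψ (g ω) := by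
    intro s
    refine SimpleFunc.induction (fun c {t} ht => ?_) (fun f₁ f₂ _ h₁ h₂ => ?_) s
    · obtain ⟨t', ht', rfl⟩ := ht
      refine ⟨t'.indicator fun _ => c, measurable_const.indicator ht', fun ω => ?_⟩
      by_cases hω : g ω ∈ t' <;>
        (classical change (if ω ∈ g ⁻¹' t' then c else (0 : ℝ)) = _; simp [Set.indicator_apply, hω, Set.mem_preimage])
    · obtain ⟨ψ₁, hψ₁, hh₁⟩ := h₁
      obtain ⟨ψ₂, hψ₂, hh₂⟩ := h₂
      exact ⟨ψ₁ + ψ₂, hψ₁.add hψ₂, fun ω => by simp [hh₁ ω, hh₂ ω]⟩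
  choose ψ hψm hψe using fun n => main (hy.approx n)
  refine ⟨fun b => liminf (fun n => ψ n b) atTop, Measurable.liminf hψm, fun ω => ?_⟩
  have ht := hy.tendsto_approx ω
  rw [show (fun n => (hy.approx n) ω) = fun n => ψ n (g ω) from funext fun n => hψe n ω] at ht
  exact ht.liminf_eq.symm

/-- Fix `1 ≤ k ≤ T-2`. If for every bounded measurable
`f : 𝒳^{T-k-1} → ℝ`, `E[f(X_{k+2:T}) ∣ σ(h_k, X_{k+1})] = E[f(X_{k+2:T}) ∣ σ(X_{1:k+1})]`
μ-a.s., and next-token consistency holds at time `k`, then `h k` is a belief state for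
`X_{1:k}`. -/
theorem middle_step_to_belief_state
    {Ω 𝒳 H : Type*}
    [MeasurableSpace Ω] [MeasurableSpace 𝒳] [DiscreteMeasurableSpace 𝒳]
    [Fintype 𝒳] [Nonempty 𝒳]
    [MeasurableSpace H] [StandardBorelSpace H]
    (μ : Measure Ω) [IsProbabilityMeasure μ]
    (T : ℕ) (hT : 2 ≤ T)
    (X : ℕ → Ω → 𝒳) (hX : ∀ t, Measurable (X t))
    (h : ℕ → Ω → H) (g : (t : ℕ) → (Fin t → 𝒳) → H)
    (hg : ∀ t, 1 ≤ t → t ≤ T → Measurable (g t))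
    (hgh : ∀ t, 1 ≤ t → t ≤ T → ∀ ω, h t ω = g t (tup X 0 t ω))
    (k : ℕ) (hk1 : 1 ≤ k) (hk2 : k ≤ T - 2)
    -- conditioning on `σ(h_k, X_{k+1})` matches conditioning on `σ(X_{1:k+1})`
    (hmid : ∀ f : (Fin (T - (k + 1)) → 𝒳) → ℝ, Measurable f → (∃ C, ∀ y, |f y| ≤ C) →
      (μ[fun ω => f (tup X (k + 1) (T - (k + 1)) ω) |
          MeasurableSpace.comap (fun ω => (h k ω, X (k + 1) ω)) inferInstance])
        =ᵐ[μ]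
      (μ[fun ω => f (tup X (k + 1) (T - (k + 1)) ω) |
          MeasurableSpace.comap (tup X 0 (k + 1)) inferInstance]))
    -- next-token consistency at time `k`
    (hnext : ∀ a : 𝒳,
      (μ[ind {ω | X (k + 1) ω = a} | MeasurableSpace.comap (h k) inferInstance])
        =ᵐ[μ]
      (μ[ind {ω | X (k + 1) ω = a} | MeasurableSpace.comap (tup X 0 k) inferInstance])) :
    -- conclusion: `h k` is a belief state for `X_{1:k}`
    ∀ f : (Fin (T - k) → 𝒳) → ℝ, Measurable f → (∃ C, ∀ y, |f y| ≤ C) →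
      (μ[fun ω => f (tup X k (T - k) ω) | MeasurableSpace.comap (h k) inferInstance])
        =ᵐ[μ]
      (μ[fun ω => f (tup X k (T - k) ω) |
          MeasurableSpace.comap (tup X 0 k) inferInstance]) := by
  intro f hf hfbdd
  obtain ⟨C, hC⟩ := hfbdd
  -- arithmetic facts
  have hkT : k ≤ T := by omega
  have hc : T - k = (T - (k + 1)) + 1 := by omega
  -- basic measurability
  have htup : ∀ s n, Measurable (tup X s n) := fun s n =>
    measurable_pi_lambda _ fun i => hX _
  have hhk_eq : h k = fun ω => g k (tup X 0 k ω) := funext (hgh k hk1 hkT)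
  have hhk_meas : Measurable (h k) := by
    rw [hhk_eq]; exact (hg k hk1 hkT).comp (htup 0 k)
  -- integrability of bounded measurable functions
  have hint : ∀ (u : Ω → ℝ), Measurable u → (∃ D, ∀ ω, |u ω| ≤ D) → Integrable u μ := by
    rintro u hu ⟨D, hD⟩
    exact (integrable_const D).mono' hu.aestronglyMeasurable
      (ae_of_all _ fun ω => by simpa [Real.norm_eq_abs] using hD ω)
  -- the pieces of the decomposition
  set fa : 𝒳 → (Fin (T - (k + 1)) → 𝒳) → ℝ :=
    fun a v => f (fun i => Fin.cons (α := fun _ => 𝒳) a v (Fin.cast hc i)) with hfadef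
  have hfa_meas : ∀ a, Measurable (fa a) := fun a => Measurable.of_discrete
  have hfa_bdd : ∀ a v, |fa a v| ≤ C := fun a v => hC _
  set I : 𝒳 → Ω → ℝ := fun a => ind {ω | X (k + 1) ω = a} with hIdef
  set F : 𝒳 → Ω → ℝ := fun a ω => fa a (tup X (k + 1) (T - (k + 1)) ω) with hFdef
  set G : 𝒳 → Ω → ℝ := fun a => I a * F a with hGdef
  have hI_bdd : ∀ a ω, ‖I a ω‖ ≤ 1 := by
    intro a ω
    by_cases hω : X (k + 1) ω = a <;>
      simp [hIdef, ind, Set.indicator_apply, hω]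
  have hI_zero : ∀ a ω, X (k + 1) ω ≠ a → I a ω = 0 := by
    intro a ω hω
    simp [hIdef, ind, Set.indicator_apply, hω]
  have hI_one : ∀ ω, I (X (k + 1) ω) ω = 1 := by
    intro ω
    simp [hIdef, ind, Set.indicator_apply]
  have hSamb : ∀ a : 𝒳, MeasurableSet {ω | X (k + 1) ω = a} :=
    fun a => (hX (k + 1)) (measurableSet_singleton a)
  have hI_meas : ∀ a, Measurable (I a) := fun a =>
    measurable_const.indicator (hSamb a)
  have hF_meas : ∀ a, Measurable (F a) := fun a =>
    (hfa_meas a).comp (htup (k + 1) (T - (k + 1)))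
  have hF_int : ∀ a, Integrable (F a) μ := fun a =>
    hint _ (hF_meas a) ⟨C, fun ω => hfa_bdd a _⟩
  have hI_int : ∀ a, Integrable (I a) μ := fun a =>
    hint _ (hI_meas a) ⟨1, fun ω => by simpa [Real.norm_eq_abs] using hI_bdd a ω⟩
  have hG_int : ∀ a, Integrable (G a) μ := fun a =>
    hint _ ((hI_meas a).mul (hF_meas a)) ⟨C, fun ω => by
      have habs : |I a ω * F a ω| = |I a ω| * |F a ω| := abs_mul _ _
      have h1 : |I a ω| ≤ 1 := by simpa [Real.norm_eq_abs] using hI_bdd a ω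
      have h2 : |F a ω| ≤ C := hfa_bdd a _
      calc |G a ω| = |I a ω| * |F a ω| := habs
        _ ≤ 1 * C := mul_le_mul h1 h2 (abs_nonneg _) zero_le_one
        _ = C := one_mul C⟩
  -- pointwise decomposition
  have hdecomp : ∀ ω, f (tup X k (T - k) ω) = ∑ a : 𝒳, G a ω := by
    intro ω
    rw [Finset.sum_eq_single (X (k + 1) ω)]
    · show f _ = I _ ω * F _ ω
      rw [hI_one ω, one_mul]
      show f _ = fa (X (k + 1) ω) (tup X (k + 1) (T - (k + 1)) ω)
      rw [hfadef]
      congr 1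
      funext i
      rcases Fin.eq_zero_or_eq_succ (Fin.cast hc i) with hz | ⟨j, hj⟩
      · have hiv : (i : ℕ) = 0 := by
          have := congrArg Fin.val hz; simpa using this
        rw [hz, Fin.cons_zero]
        show X (k + 1 + (i : ℕ)) ω = X (k + 1) ω
        rw [hiv]
      · have hiv : (i : ℕ) = (j : ℕ) + 1 := by
          have := congrArg Fin.val hj; simpa using this
        rw [hj, Fin.cons_succ]
        show X (k + 1 + (i : ℕ)) ω = X (k + 1 + 1 + (j : ℕ)) ω
        rw [hiv]; ring_nf
    · intro b _ hb
      show I b ω * F b ω = 0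
      rw [hI_zero b ω (fun hx => hb hx.symm), zero_mul]
    · intro hmem; exact absurd (Finset.mem_univ _) hmem
  -- measurability of the indicator sets with respect to the relevant σ-algebras
  have hS_mX : ∀ a : 𝒳, MeasurableSet[MeasurableSpace.comap
      (fun ω => (h k ω, X (k + 1) ω)) inferInstance] {ω | X (k + 1) ω = a} := by
    intro a
    refine ⟨(Set.univ : Set H) ×ˢ {a}, MeasurableSet.univ.prod (measurableSet_singleton a), ?_⟩
    ext ω; simp [eq_comm]
  have hS_mk1 : ∀ a : 𝒳, MeasurableSet[MeasurableSpace.comap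
      (tup X 0 (k + 1)) inferInstance] {ω | X (k + 1) ω = a} := by
    intro a
    refine ⟨{v : Fin (k + 1) → 𝒳 | v (Fin.last k) = a}, MeasurableSet.of_discrete, ?_⟩
    ext ω
    simp only [Set.mem_preimage, Set.mem_setOf_eq, tup, Fin.val_last]
    rw [show 0 + 1 + k = k + 1 from by omega]
  -- σ-algebra inequalities (stated before abbreviating, to use the ambient instance)
  have hmX_le : MeasurableSpace.comap (fun ω => (h k ω, X (k + 1) ω)) inferInstance
      ≤ ‹MeasurableSpace Ω› :=
    measurable_iff_comap_le.mp (hhk_meas.prodMk (hX (k + 1)))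
  have hmk_le : MeasurableSpace.comap (tup X 0 k) inferInstance ≤ ‹MeasurableSpace Ω› :=
    measurable_iff_comap_le.mp (htup 0 k)
  have hmk1_le : MeasurableSpace.comap (tup X 0 (k + 1)) inferInstance ≤ ‹MeasurableSpace Ω› :=
    measurable_iff_comap_le.mp (htup 0 (k + 1))
  -- the four σ-algebras
  set m0 : MeasurableSpace Ω := MeasurableSpace.comap (h k) inferInstance with hm0def
  set mX : MeasurableSpace Ω :=
    MeasurableSpace.comap (fun ω => (h k ω, X (k + 1) ω)) inferInstance with hmXdef
  set mk : MeasurableSpace Ω := MeasurableSpace.comap (tup X 0 k) inferInstance with hmkdef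
  set mk1 : MeasurableSpace Ω :=
    MeasurableSpace.comap (tup X 0 (k + 1)) inferInstance with hmk1def
  have hm0_mk : m0 ≤ mk := by
    rintro s ⟨t, ht, rfl⟩
    refine ⟨(g k) ⁻¹' t, hg k hk1 hkT ht, ?_⟩
    ext ω
    simp [hgh k hk1 hkT ω]
  have hm0_mX : m0 ≤ mX := by
    rintro s ⟨t, ht, rfl⟩
    refine ⟨t ×ˢ Set.univ, ht.prod MeasurableSet.univ, ?_⟩
    ext ω
    simp
  have hmk_mk1 : mk ≤ mk1 := by
    rintro s ⟨t, ht, rfl⟩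
    refine ⟨(fun (v : Fin (k + 1) → 𝒳) (i : Fin k) => v i.castSucc) ⁻¹' t,
      (measurable_pi_lambda _ fun i => measurable_pi_apply _) ht, ?_⟩
    rfl
  haveI : SigmaFinite (μ.trim hmX_le) := inferInstance
  haveI : SigmaFinite (μ.trim hmk1_le) := inferInstance
  have hI_sm_mX : ∀ a, StronglyMeasurable[mX] (I a) :=
    fun a => stronglyMeasurable_const.indicator (hS_mX a)
  have hI_sm_mk1 : ∀ a, StronglyMeasurable[mk1] (I a) :=
    fun a => stronglyMeasurable_const.indicator (hS_mk1 a)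
  -- the key per-token identity
  have key : ∀ a : 𝒳, (μ[G a | m0]) =ᵐ[μ] (μ[G a | mk]) := by
    intro a
    -- factor the conditional expectation given (h k, X (k+1)) through the pair map
    obtain ⟨Φ, hΦm, hΦe⟩ := exists_factor_of_stronglyMeasurable_comap
      (fun ω => (h k ω, X (k + 1) ω)) (μ[F a | mX]) stronglyMeasurable_condExp
    set φ : Ω → ℝ := fun ω => Φ (h k ω, a) with hφdef
    have hhk_m0 : Measurable[m0] (h k) := fun s hs => ⟨s, hs, rfl⟩
    have hφ_sm0 : StronglyMeasurable[m0] φ :=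
      Measurable.stronglyMeasurable
        ((hΦm.comp (measurable_id.prodMk measurable_const)).comp hhk_m0)
    have hφ_smk : StronglyMeasurable[mk] φ := hφ_sm0.mono hm0_mk
    have hkey_pt : ∀ ω, I a ω * (μ[F a | mX]) ω = I a ω * φ ω := by
      intro ω
      by_cases hω : X (k + 1) ω = a
      · rw [hΦe ω, hφdef]
        simp only [hω]
      · rw [hI_zero a ω hω, zero_mul, zero_mul]
    have hIcond_int : Integrable (fun ω => I a ω * (μ[F a | mX]) ω) μ :=
      integrable_condExp.bdd_mul (hI_meas a).aestronglyMeasurable (ae_of_all _ (hI_bdd a))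
    have hφI_int : Integrable (φ * I a) μ := by
      refine hIcond_int.congr (ae_of_all _ fun ω => ?_)
      show I a ω * (μ[F a | mX]) ω = φ ω * I a ω
      rw [hkey_pt ω, mul_comm]
    -- side of m0
    have t0 : (μ[G a | m0]) =ᵐ[μ] μ[μ[G a | mX] | m0] :=
      (condExp_condExp_of_le hm0_mX hmX_le).symm
    have p0 : (μ[G a | mX]) =ᵐ[μ] I a * μ[F a | mX] :=
      condExp_mul_of_stronglyMeasurable_left (hI_sm_mX a) (hG_int a) (hF_int a)
    have p0' : (μ[G a | mX]) =ᵐ[μ] φ * I a := by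
      refine p0.trans (ae_of_all _ fun ω => ?_)
      show I a ω * (μ[F a | mX]) ω = φ ω * I a ω
      rw [hkey_pt ω, mul_comm]
    have e0 : (μ[G a | m0]) =ᵐ[μ] φ * μ[I a | m0] :=
      t0.trans ((condExp_congr_ae p0').trans
        (condExp_mul_of_stronglyMeasurable_left hφ_sm0 hφI_int (hI_int a)))
    -- side of mk
    have hmidF : (μ[F a | mX]) =ᵐ[μ] (μ[F a | mk1]) :=
      hmid (fa a) (hfa_meas a) ⟨C, hfa_bdd a⟩
    have t1 : (μ[G a | mk]) =ᵐ[μ] μ[μ[G a | mk1] | mk] :=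
      (condExp_condExp_of_le hmk_mk1 hmk1_le).symm
    have p1 : (μ[G a | mk1]) =ᵐ[μ] I a * μ[F a | mk1] :=
      condExp_mul_of_stronglyMeasurable_left (hI_sm_mk1 a) (hG_int a) (hF_int a)
    have p1' : (μ[G a | mk1]) =ᵐ[μ] φ * I a := by
      refine p1.trans ?_
      filter_upwards [hmidF] with ω hω
      show I a ω * (μ[F a | mk1]) ω = φ ω * I a ω
      rw [← hω, hkey_pt ω, mul_comm]
    have e1 : (μ[G a | mk]) =ᵐ[μ] φ * μ[I a | m0] := by
      refine t1.trans ((condExp_congr_ae p1').trans ?_)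
      refine (condExp_mul_of_stronglyMeasurable_left hφ_smk hφI_int (hI_int a)).trans ?_
      filter_upwards [hnext a] with ω hω
      show φ ω * (μ[I a | mk]) ω = φ ω * (μ[I a | m0]) ω
      rw [← hω]
    exact e0.trans e1.symm
  -- assemble
  have hGsum : (fun ω => f (tup X k (T - k) ω)) = ∑ a : 𝒳, G a := by
    funext ω
    rw [hdecomp ω, Finset.sum_apply]
  rw [hGsum]
  calc μ[∑ a : 𝒳, G a | m0]
      =ᵐ[μ] ∑ a : 𝒳, μ[G a | m0] := condExp_finsetSum (fun a _ => hG_int a) m0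
    _ =ᵐ[μ] ∑ a : 𝒳, μ[G a | mk] := by
        have hall : ∀ᵐ ω ∂μ, ∀ a : 𝒳, (μ[G a | m0]) ω = (μ[G a | mk]) ω :=
          (ae_all_iff).2 key
        filter_upwards [hall] with ω hω
        simp only [Finset.sum_apply]
        exact Finset.sum_congr rfl fun a _ => hω a
    _ =ᵐ[μ] μ[∑ a : 𝒳, G a | mk] := (condExp_finsetSum (fun a _ => hG_int a) mk).symm
end
end

section
/- Suppose the hidden-state updates are deterministic: for each t with 1 ≤ t ≤ T−2 there is a measurable map F_t : H × 𝒳 → H such that h_{t+1} = F_t(h_t, X_{t+1}) μ-almost surely. If next-token consistency holds at every time t with 1 ≤ t ≤ T−1, then for every t with 1 ≤ t ≤ T−1, the hidden state h_t is a belief state for X_{1:t}. -/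
open MeasureTheory ProbabilityTheory

noncomputable section

open Filter Topology


lemma eventuallyEq_finsetSum {Ω ι β : Type*} [MeasurableSpace Ω] {μ : MeasureTheory.Measure Ω}
    [AddCommMonoid β] (s : Finset ι) (f g : ι → Ω → β)
    (h : ∀ i ∈ s, f i =ᵐ[μ] g i) : (∑ i ∈ s, f i) =ᵐ[μ] ∑ i ∈ s, g i := by
  have h' : ∀ᵐ ω ∂μ, ∀ i ∈ s, f i ω = g i ω := (Filter.eventually_all_finset s).2 h
  filter_upwards [h'] with ω hω
  simp only [Finset.sum_apply]
  exact Finset.sum_congr rfl hω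

lemma ind_abs_le_one {Ω : Type*} (A : Set Ω) (ω : Ω) : |ind A ω| ≤ 1 := by
  classical
  unfold ind
  rw [Set.indicator_apply]
  split_ifs <;> norm_num

/-- Doob–Dynkin factorization for real-valued functions. -/
lemma doobDynkin' {Ω H : Type*} [MeasurableSpace H] (g : Ω → H) (f : Ω → ℝ)
    (hf : Measurable[MeasurableSpace.comap g inferInstance] f) :
    ∃ φ : H → ℝ, Measurable φ ∧ ∀ ω, f ω = φ (g ω) := by
  classical
  set m := MeasurableSpace.comap g (inferInstance : MeasurableSpace H) with hm
  have hsm : StronglyMeasurable[m] f := hf.stronglyMeasurable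
  -- factor each simple function
  have hstep : ∀ u : @SimpleFunc Ω m ℝ, ∃ ψ : H → ℝ, Measurable ψ ∧ ∀ ω, u ω = ψ (g ω) := by
    intro u
    have hfib : ∀ c : ℝ, ∃ S : Set H, MeasurableSet S ∧ g ⁻¹' S = u ⁻¹' {c} := fun c =>
      (u.measurableSet_fiber c : MeasurableSet[m] _)
    choose T hT1 hT2 using hfib
    refine ⟨fun x => ∑ c ∈ u.range, Set.indicator (T c) (fun _ => c) x, ?_, ?_⟩
    · exact Finset.measurable_sum _ fun c _ => (measurable_const.indicator (hT1 c))
    · intro ω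
      have hmem : ∀ c : ℝ, g ω ∈ T c ↔ u ω = c := by
        intro c
        constructor
        · intro hc
          have : ω ∈ g ⁻¹' T c := hc
          rw [hT2 c] at this; exact this
        · intro hc
          have : ω ∈ u ⁻¹' {c} := hc
          rw [← hT2 c] at this; exact this
      have : ∀ c ∈ u.range, Set.indicator (T c) (fun _ => c) (g ω)
          = if u ω = c then c else 0 := by
        intro c _
        rw [Set.indicator_apply]
        simp only [hmem c]
      show u ω = ∑ c ∈ u.range, Set.indicator (T c) (fun _ => c) (g ω)
      rw [Finset.sum_congr rfl this, Finset.sum_ite_eq u.range (u ω) (fun c => c)]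
      simp [SimpleFunc.mem_range_self]
  choose ψ hψm hψ using fun n => hstep (hsm.approx n)
  have htend : ∀ ω, Tendsto (fun n => ψ n (g ω)) atTop (𝓝 (f ω)) := by
    intro ω
    have := hsm.tendsto_approx ω
    simpa [fun n => hψ n ω] using this
  set D : Set H := {x | ∃ c, Tendsto (fun n => ψ n x) atTop (𝓝 c)} with hD
  have hDmeas : MeasurableSet D := measurableSet_exists_tendsto hψm
  refine ⟨fun x => if x ∈ D then limUnder atTop (fun n => ψ n x) else 0, ?_, ?_⟩
  · have hlim : ∀ x, Tendsto (fun n => D.indicator (ψ n) x) atTop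
        (𝓝 (if x ∈ D then limUnder atTop (fun n => ψ n x) else 0)) := by
      intro x
      by_cases hx : x ∈ D
      · rw [if_pos hx]
        obtain ⟨c, hc⟩ := hx
        have : ∀ n, D.indicator (ψ n) x = ψ n x :=
          fun n => Set.indicator_of_mem (show x ∈ D from ⟨c, hc⟩) (ψ n)
        simp only [this]
        rw [hc.limUnder_eq]; exact hc
      · rw [if_neg hx]
        simp only [Set.indicator_of_notMem hx]
        exact tendsto_const_nhds
    exact measurable_of_tendsto_metrizable
      (fun n => (hψm n).indicator hDmeas) (tendsto_pi_nhds.2 hlim)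
  · intro ω
    have hgD : g ω ∈ D := ⟨f ω, htend ω⟩
    show f ω = if g ω ∈ D then limUnder atTop (fun n => ψ n (g ω)) else 0
    rw [if_pos hgD, (htend ω).limUnder_eq]

/-- Suppose the hidden-state updates are deterministic: for each
`1 ≤ t ≤ T-2` there is a measurable `F_t : H × 𝒳 → H` with
`h (t+1) = F_t (h t, X (t+1))` μ-a.s. If next-token consistency holds at every time
`1 ≤ t ≤ T-1`, then for every `1 ≤ t ≤ T-1` the hidden state `h t` is a belief state
for `X_{1:t}`. -/
theorem deterministic_updates_yield_belief_states
    {Ω 𝒳 H : Type*}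
    [MeasurableSpace Ω] [MeasurableSpace 𝒳] [DiscreteMeasurableSpace 𝒳]
    [Fintype 𝒳] [Nonempty 𝒳]
    [MeasurableSpace H] [StandardBorelSpace H]
    (μ : Measure Ω) [IsProbabilityMeasure μ]
    (T : ℕ) (hT : 2 ≤ T)
    (X : ℕ → Ω → 𝒳) (hX : ∀ t, Measurable (X t))
    (h : ℕ → Ω → H) (g : (t : ℕ) → (Fin t → 𝒳) → H)
    (hg : ∀ t, 1 ≤ t → t ≤ T → Measurable (g t))
    (hgh : ∀ t, 1 ≤ t → t ≤ T → ∀ ω, h t ω = g t (tup X 0 t ω))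
    -- deterministic hidden-state updates
    (hdet : ∀ t, 1 ≤ t → t ≤ T - 2 → ∃ F : H × 𝒳 → H, Measurable F ∧
      ∀ᵐ ω ∂μ, h (t + 1) ω = F (h t ω, X (t + 1) ω))
    -- next-token consistency at every time `1 ≤ t ≤ T-1`
    (hnext : ∀ t, 1 ≤ t → t ≤ T - 1 → ∀ a : 𝒳,
      (μ[ind {ω | X (t + 1) ω = a} | MeasurableSpace.comap (h t) inferInstance])
        =ᵐ[μ]
      (μ[ind {ω | X (t + 1) ω = a} | MeasurableSpace.comap (tup X 0 t) inferInstance])) :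
    -- conclusion: `h t` is a belief state for `X_{1:t}` for every `1 ≤ t ≤ T-1`
    ∀ t, 1 ≤ t → t ≤ T - 1 →
      ∀ f : (Fin (T - t) → 𝒳) → ℝ, Measurable f → (∃ C, ∀ y, |f y| ≤ C) →
        (μ[fun ω => f (tup X t (T - t) ω) | MeasurableSpace.comap (h t) inferInstance])
          =ᵐ[μ]
        (μ[fun ω => f (tup X t (T - t) ω) |
            MeasurableSpace.comap (tup X 0 t) inferInstance]) := by
  classical
  -- basic measurability facts
  have htup : ∀ s n, Measurable (tup X s n) := fun s n =>
    measurable_pi_lambda _ fun i => hX _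
  have hsing : ∀ (n : ℕ) (y : Fin n → 𝒳), MeasurableSet {v : Fin n → 𝒳 | v = y} := by
    intro n y
    have : {v : Fin n → 𝒳 | v = y} = ⋂ i, (fun v : Fin n → 𝒳 => v i) ⁻¹' {y i} := by
      ext v; simp [funext_iff]
    rw [this]
    refine MeasurableSet.iInter fun i => ?_
    exact (measurable_pi_apply i) (MeasurableSet.of_discrete (s := ({y i} : Set 𝒳)))
  have hindint : ∀ (A : Set Ω), MeasurableSet A → Integrable (ind A) μ := fun A hA =>
    (integrable_const (1 : ℝ)).indicator hA
  -- σ-algebra comparisons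
  have hmX_le : ∀ t, MeasurableSpace.comap (tup X 0 t) inferInstance
      ≤ (inferInstance : MeasurableSpace Ω) := fun t => (htup 0 t).comap_le
  have hmh_le_mX : ∀ t, 1 ≤ t → t ≤ T →
      MeasurableSpace.comap (h t) inferInstance
        ≤ MeasurableSpace.comap (tup X 0 t) inferInstance := by
    intro t h1 h2
    have hht : h t = g t ∘ tup X 0 t := funext (hgh t h1 h2)
    rw [hht, ← MeasurableSpace.comap_comp]
    exact MeasurableSpace.comap_mono (hg t h1 h2).comap_le
  have hmX_mono : ∀ t : ℕ, MeasurableSpace.comap (tup X 0 t) inferInstance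
      ≤ MeasurableSpace.comap (tup X 0 (t + 1)) inferInstance := by
    intro t
    have hres : tup X 0 t
        = (fun v : Fin (t + 1) → 𝒳 => fun i : Fin t => v i.castSucc) ∘ tup X 0 (t + 1) := by
      funext ω i
      simp [tup]
    rw [hres, ← MeasurableSpace.comap_comp]
    exact MeasurableSpace.comap_mono
      (measurable_pi_lambda _ fun i => measurable_pi_apply _).comap_le
  have hX_memX : ∀ (t : ℕ) (a : 𝒳),
      MeasurableSet[MeasurableSpace.comap (tup X 0 (t + 1)) inferInstance]
        {ω | X (t + 1) ω = a} := by
    intro t a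
    refine MeasurableSpace.measurableSet_comap.mpr
      ⟨{v : Fin (t + 1) → 𝒳 | v ⟨t, Nat.lt_succ_self t⟩ = a}, ?_, ?_⟩
    · show MeasurableSet ((fun v : Fin (t + 1) → 𝒳 => v ⟨t, Nat.lt_succ_self t⟩) ⁻¹' {a})
      exact (measurable_pi_apply _) (MeasurableSet.of_discrete (s := ({a} : Set 𝒳)))
    · ext ω
      simp only [Set.mem_preimage, Set.mem_setOf_eq, tup]
      rw [show 0 + 1 + t = t + 1 from by omega]
  -- key induction: the indicator version
  have key : ∀ k t, 1 ≤ t → t + k = T → ∀ y : Fin k → 𝒳,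
      (μ[ind {ω | tup X t k ω = y} | MeasurableSpace.comap (h t) inferInstance])
        =ᵐ[μ]
      (μ[ind {ω | tup X t k ω = y} | MeasurableSpace.comap (tup X 0 t) inferInstance]) := by
    intro k
    induction k with
    | zero =>
      intro t h1 h2 y
      have huniv : {ω | tup X t 0 ω = y} = Set.univ := by
        ext ω; simp [Subsingleton.elim (tup X t 0 ω) y]
      have hone : ind (Set.univ : Set Ω) = fun _ => (1 : ℝ) := by
        funext ω; simp [ind]
      rw [huniv, hone,
        condExp_const ((hmh_le_mX t h1 (by omega)).trans (hmX_le t)) (1 : ℝ),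
        condExp_const (hmX_le t) (1 : ℝ)]
    | succ k ih =>
      intro t h1 h2 y
      by_cases hk : k = 0
      · subst hk
        have hset : {ω | tup X t 1 ω = y} = {ω | X (t + 1) ω = y 0} := by
          ext ω
          simp only [Set.mem_setOf_eq, funext_iff, Fin.forall_fin_one]
          constructor
          · intro hy; simpa [tup] using hy
          · intro hy; simpa [tup] using hy
        rw [hset]
        exact hnext t h1 (by omega) (y 0)
      · have h1' : 1 ≤ t + 1 := by omega
        have h2' : (t + 1) + k = T := by omega
        have htT1 : t ≤ T - 1 := by omega
        have htT2 : t ≤ T - 2 := by omega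
        set a := y 0 with ha
        set y' : Fin k → 𝒳 := fun j => y j.succ with hy'
        set A := {ω | X (t + 1) ω = a} with hA
        set Z := ind {ω | tup X (t + 1) k ω = y'} with hZ
        -- splitting the indicator
        have hiff : ∀ ω, tup X t (k + 1) ω = y ↔
            (X (t + 1) ω = a ∧ tup X (t + 1) k ω = y') := by
          intro ω
          constructor
          · intro hy
            constructor
            · have h0 := congrFun hy 0
              simpa [tup] using h0
            · funext j
              have hj := congrFun hy j.succ
              simp only [tup, Fin.val_succ] at hj ⊢
              rw [show t + 1 + 1 + (j : ℕ) = t + 1 + ((j : ℕ) + 1) from by omega]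
              exact hj
          · rintro ⟨h0, hrest⟩
            funext i
            refine Fin.cases ?_ ?_ i
            · simpa [tup] using h0
            · intro j
              have hj := congrFun hrest j
              simp only [tup, Fin.val_succ] at hj ⊢
              rw [show t + 1 + ((j : ℕ) + 1) = t + 1 + 1 + (j : ℕ) from by omega]
              exact hj
        have hWsplit : ind {ω | tup X t (k + 1) ω = y} = fun ω => ind A ω * Z ω := by
          funext ω
          by_cases hA' : X (t + 1) ω = a <;> by_cases hZ' : tup X (t + 1) k ω = y' <;>
            simp [ind, Set.indicator_apply, hA, hZ, hiff ω, hA', hZ']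
        -- measurability and integrability
        have hAmeas : MeasurableSet A := (hX (t + 1)) (MeasurableSet.of_discrete (s := ({a} : Set 𝒳)))
        have hZset : MeasurableSet {ω | tup X (t + 1) k ω = y'} :=
          (htup (t + 1) k) (hsing k y')
        have hZint : Integrable Z μ := hindint _ hZset
        have hAint : Integrable (ind A) μ := hindint _ hAmeas
        have hAsm : StronglyMeasurable[MeasurableSpace.comap (tup X 0 (t + 1)) inferInstance]
            (ind A) := by
          have hmem := hX_memX t a
          have : Measurable[MeasurableSpace.comap (tup X 0 (t + 1)) inferInstance] (ind A) :=
            (@measurable_const ℝ Ω _ (MeasurableSpace.comap (tup X 0 (t + 1)) inferInstance)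
              1).indicator hmem
          exact this.stronglyMeasurable
        have hAbd : ∀ᵐ ω ∂μ, ‖ind A ω‖ ≤ 1 :=
          Filter.Eventually.of_forall fun ω => by
            rw [Real.norm_eq_abs]; exact ind_abs_le_one _ _
        -- induction hypothesis
        have hIH := ih (t + 1) h1' h2' y'
        -- Doob–Dynkin factorization of the conditional expectation at time t+1
        have hcm : Measurable[MeasurableSpace.comap (h (t + 1)) inferInstance]
            (μ[Z | MeasurableSpace.comap (h (t + 1)) inferInstance]) :=
          stronglyMeasurable_condExp.measurable
        obtain ⟨φ₀, hφ₀m, hφ₀⟩ := doobDynkin' (h (t + 1)) _ hcm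
        set φ : H → ℝ := fun x => max (-1 : ℝ) (min 1 (φ₀ x)) with hφ
        have hφm : Measurable φ := measurable_const.max (measurable_const.min hφ₀m)
        have hφbd : ∀ x, |φ x| ≤ 1 := by
          intro x
          rw [abs_le]
          exact ⟨le_max_left _ _, max_le (by norm_num) (min_le_left _ _)⟩
        have hZbd : ∀ᵐ ω ∂μ, |(μ[Z | MeasurableSpace.comap (h (t + 1)) inferInstance]) ω| ≤ 1 := by
          have : ∀ᵐ ω ∂μ, |Z ω| ≤ ((1 : NNReal) : ℝ) :=
            Filter.Eventually.of_forall fun ω => by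
              simpa using ind_abs_le_one {ω | tup X (t + 1) k ω = y'} ω
          simpa using ae_bdd_condExp_of_ae_bdd this
        have hφeq : (μ[Z | MeasurableSpace.comap (h (t + 1)) inferInstance])
            =ᵐ[μ] fun ω => φ (h (t + 1) ω) := by
          filter_upwards [hZbd] with ω hω
          rw [hφ₀ ω] at hω ⊢
          show φ₀ (h (t + 1) ω) = max (-1 : ℝ) (min 1 (φ₀ (h (t + 1) ω)))
          rw [min_eq_right (abs_le.mp hω).2, max_eq_right (abs_le.mp hω).1]
        -- deterministic update
        obtain ⟨F, hFm, hFae⟩ := hdet t h1 htT2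
        set ψ : H → ℝ := fun x => φ (F (x, a)) with hψ
        have hψm : Measurable ψ := hφm.comp (hFm.comp (measurable_id.prodMk measurable_const))
        have hψbd : ∀ x, |ψ x| ≤ 1 := fun x => hφbd _
        have hsub : (fun ω => ind A ω * φ (h (t + 1) ω))
            =ᵐ[μ] fun ω => ind A ω * ψ (h t ω) := by
          filter_upwards [hFae] with ω hω
          by_cases hA' : X (t + 1) ω = a
          · rw [hω, hA']
          · have hnA : ω ∉ A := hA'
            simp [ind, Set.indicator_of_notMem hnA]
        have hsub2 : (fun ω => ind A ω * (μ[Z | MeasurableSpace.comap (h (t + 1)) inferInstance]) ω)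
            =ᵐ[μ] fun ω => ind A ω * ψ (h t ω) :=
          (EventuallyEq.mul (EventuallyEq.refl _ _) hφeq).trans hsub
        -- strong measurability of ψ ∘ h t
        have hψhm : StronglyMeasurable[MeasurableSpace.comap (h t) inferInstance]
            (fun ω => ψ (h t ω)) :=
          (hψm.comp (comap_measurable (h t))).stronglyMeasurable
        have hψXm : StronglyMeasurable[MeasurableSpace.comap (tup X 0 t) inferInstance]
            (fun ω => ψ (h t ω)) := hψhm.mono (hmh_le_mX t h1 (by omega))
        have hψbd' : ∀ᵐ ω ∂μ, ‖ψ (h t ω)‖ ≤ 1 :=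
          Filter.Eventually.of_forall fun ω => by rw [Real.norm_eq_abs]; exact hψbd _
        have hcomm : (fun ω => ind A ω * ψ (h t ω)) = fun ω => ψ (h t ω) * ind A ω :=
          funext fun ω => mul_comm _ _
        -- the chain of a.e. equalities
        refine EventuallyEq.symm ?_
        calc (μ[ind {ω | tup X t (k + 1) ω = y} | MeasurableSpace.comap (tup X 0 t) inferInstance])
            = μ[(fun ω => ind A ω * Z ω) | MeasurableSpace.comap (tup X 0 t) inferInstance] := by
              rw [hWsplit]
          _ =ᵐ[μ] μ[μ[(fun ω => ind A ω * Z ω) |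
                MeasurableSpace.comap (tup X 0 (t + 1)) inferInstance] |
                MeasurableSpace.comap (tup X 0 t) inferInstance] :=
              (condExp_condExp_of_le (hmX_mono t) (hmX_le (t + 1))).symm
          _ =ᵐ[μ] μ[(fun ω => ind A ω *
                (μ[Z | MeasurableSpace.comap (tup X 0 (t + 1)) inferInstance]) ω) |
                MeasurableSpace.comap (tup X 0 t) inferInstance] :=
              condExp_congr_ae
                (condExp_stronglyMeasurable_mul_of_bound (hmX_le (t + 1)) hAsm hZint 1 hAbd)
          _ =ᵐ[μ] μ[(fun ω => ind A ω *
                (μ[Z | MeasurableSpace.comap (h (t + 1)) inferInstance]) ω) |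
                MeasurableSpace.comap (tup X 0 t) inferInstance] :=
              condExp_congr_ae (EventuallyEq.mul (EventuallyEq.refl _ _) hIH.symm)
          _ =ᵐ[μ] μ[(fun ω => ind A ω * ψ (h t ω)) |
                MeasurableSpace.comap (tup X 0 t) inferInstance] :=
              condExp_congr_ae hsub2
          _ = μ[(fun ω => ψ (h t ω) * ind A ω) |
                MeasurableSpace.comap (tup X 0 t) inferInstance] := by rw [hcomm]
          _ =ᵐ[μ] fun ω => ψ (h t ω) *
                (μ[ind A | MeasurableSpace.comap (tup X 0 t) inferInstance]) ω :=
              condExp_stronglyMeasurable_mul_of_bound (hmX_le t) hψXm hAint 1 hψbd'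
          _ =ᵐ[μ] fun ω => ψ (h t ω) *
                (μ[ind A | MeasurableSpace.comap (h t) inferInstance]) ω :=
              EventuallyEq.mul (EventuallyEq.refl _ _) (hnext t h1 htT1 a).symm
          _ =ᵐ[μ] μ[(fun ω => ψ (h t ω) * ind A ω) |
                MeasurableSpace.comap (h t) inferInstance] :=
              (condExp_stronglyMeasurable_mul_of_bound
                ((hmh_le_mX t h1 (by omega)).trans (hmX_le t)) hψhm hAint 1 hψbd').symm
          _ = μ[(fun ω => ind A ω * ψ (h t ω)) |
                MeasurableSpace.comap (h t) inferInstance] := by rw [hcomm]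
          _ =ᵐ[μ] μ[(fun ω => ind A ω *
                (μ[Z | MeasurableSpace.comap (h (t + 1)) inferInstance]) ω) |
                MeasurableSpace.comap (h t) inferInstance] :=
              condExp_congr_ae hsub2.symm
          _ =ᵐ[μ] μ[(fun ω => ind A ω *
                (μ[Z | MeasurableSpace.comap (tup X 0 (t + 1)) inferInstance]) ω) |
                MeasurableSpace.comap (h t) inferInstance] :=
              condExp_congr_ae (EventuallyEq.mul (EventuallyEq.refl _ _) hIH)
          _ =ᵐ[μ] μ[μ[(fun ω => ind A ω * Z ω) |
                MeasurableSpace.comap (tup X 0 (t + 1)) inferInstance] |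
                MeasurableSpace.comap (h t) inferInstance] :=
              condExp_congr_ae
                (condExp_stronglyMeasurable_mul_of_bound (hmX_le (t + 1)) hAsm hZint 1 hAbd).symm
          _ =ᵐ[μ] μ[(fun ω => ind A ω * Z ω) | MeasurableSpace.comap (h t) inferInstance] :=
              condExp_condExp_of_le
                ((hmh_le_mX t h1 (by omega)).trans (hmX_mono t)) (hmX_le (t + 1))
          _ = μ[ind {ω | tup X t (k + 1) ω = y} | MeasurableSpace.comap (h t) inferInstance] := by
              rw [hWsplit]
  -- conclusion from the indicator version by linearity
  intro t h1t h2t f hf hbf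
  have htk : t + (T - t) = T := by omega
  have hkey := key (T - t) t h1t htk
  have hdecomp : (fun ω => f (tup X t (T - t) ω))
      = ∑ y : Fin (T - t) → 𝒳, f y • ind {ω | tup X t (T - t) ω = y} := by
    funext ω
    rw [Finset.sum_apply]
    have hterm : ∀ y ∈ (Finset.univ : Finset (Fin (T - t) → 𝒳)),
        (f y • ind {ω' | tup X t (T - t) ω' = y}) ω
          = if tup X t (T - t) ω = y then f y else 0 := by
      intro y _
      simp only [Pi.smul_apply, smul_eq_mul, ind, Set.indicator_apply, Set.mem_setOf_eq]
      split_ifs <;> simp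
    rw [Finset.sum_congr rfl hterm, Finset.sum_ite_eq Finset.univ (tup X t (T - t) ω) f]
    simp
  have hinty : ∀ y : Fin (T - t) → 𝒳,
      Integrable (f y • ind {ω | tup X t (T - t) ω = y}) μ := fun y =>
    (hindint _ ((htup t (T - t)) (hsing _ y))).smul (f y)
  have hterm_ae : ∀ (m' : MeasurableSpace Ω),
      ∀ y ∈ (Finset.univ : Finset (Fin (T - t) → 𝒳)),
      (μ[f y • ind {ω | tup X t (T - t) ω = y} | m'])
        =ᵐ[μ] f y • (μ[ind {ω | tup X t (T - t) ω = y} | m']) := fun m' y _ =>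
    condExp_smul (f y) _ m'
  calc (μ[fun ω => f (tup X t (T - t) ω) | MeasurableSpace.comap (h t) inferInstance])
      = μ[∑ y : Fin (T - t) → 𝒳, f y • ind {ω | tup X t (T - t) ω = y} |
          MeasurableSpace.comap (h t) inferInstance] := by rw [hdecomp]
    _ =ᵐ[μ] ∑ y : Fin (T - t) → 𝒳, (μ[f y • ind {ω | tup X t (T - t) ω = y} |
          MeasurableSpace.comap (h t) inferInstance]) :=
        condExp_finset_sum (fun y _ => hinty y) _
    _ =ᵐ[μ] ∑ y : Fin (T - t) → 𝒳, (μ[f y • ind {ω | tup X t (T - t) ω = y} |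
          MeasurableSpace.comap (tup X 0 t) inferInstance]) := by
        refine eventuallyEq_finsetSum _ _ _ fun y _ => ?_
        refine (hterm_ae _ y (Finset.mem_univ y)).trans ?_
        refine EventuallyEq.trans ?_ (hterm_ae _ y (Finset.mem_univ y)).symm
        filter_upwards [hkey y] with ω hω
        simp [hω]
    _ =ᵐ[μ] μ[∑ y : Fin (T - t) → 𝒳, f y • ind {ω | tup X t (T - t) ω = y} |
          MeasurableSpace.comap (tup X 0 t) inferInstance] :=
        (condExp_finset_sum (fun y _ => hinty y) _).symm
    _ = μ[fun ω => f (tup X t (T - t) ω) | MeasurableSpace.comap (tup X 0 t) inferInstance] := by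
        rw [hdecomp]
end
end

section
/- Let k ≥ 1 and let t satisfy 1 ≤ t and t + k ≤ T. If the system is k-observable at time t, then there exists a Borel-measurable function G : [0,1]^{𝒳^k} → [0,1]^{𝒳^{T−t}} such that μ-almost surely, (μ[X_{t+1:T} = w' ∣ σ(X_{1:t})])_{w' ∈ 𝒳^{T−t}} = G((μ[X_{t+1:t+k} = w ∣ σ(X_{1:t})])_{w ∈ 𝒳^k}); that is, the full-horizon conditional distribution of the future tokens given the history is a measurable function of the joint conditional distribution of the next k tokens given the history. -/
open MeasureTheory ProbabilityTheory

noncomputable section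

/-- A function that agrees with a constant off a finite set is measurable. -/
lemma measurable_of_ne_const_finite {α β : Type*} [MeasurableSpace α]
    [MeasurableSingletonClass α] [MeasurableSpace β] {G : α → β} {c : β}
    (h : {a | G a ≠ c}.Finite) : Measurable G := by
  intro B hB
  by_cases hc : c ∈ B
  · have hset : G ⁻¹' B = ({a | G a ≠ c} ∩ G ⁻¹' B) ∪ {a | G a ≠ c}ᶜ := by
      ext a
      by_cases hga : G a = c <;> simp [hga, hc]
    rw [hset]
    exact ((h.subset Set.inter_subset_left).measurableSet).union h.measurableSet.compl
  · have hset : G ⁻¹' B ⊆ {a | G a ≠ c} := by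
      intro a ha hga
      exact hc (hga ▸ ha)
    exact (h.subset hset).measurableSet

/-- A function measurable with respect to `comap f` is constant on the fibers of `f`. -/
lemma const_on_fibers {Ω α : Type*} [MeasurableSpace α] {f : Ω → α} {h : Ω → ℝ}
    (hh : @Measurable Ω ℝ (MeasurableSpace.comap f inferInstance) _ h)
    {ω ω' : Ω} (he : f ω = f ω') : h ω = h ω' := by
  obtain ⟨S, -, hS⟩ := hh (measurableSet_singleton (h ω))
  have hω : ω ∈ f ⁻¹' S := by
    rw [hS]; exact rfl
  have hω' : ω' ∈ f ⁻¹' S := by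
    simp only [Set.mem_preimage] at hω ⊢
    rwa [← he]
  rw [hS] at hω'
  exact (hω' : h ω' = h ω).symm

/-- The conditional expectation of an indicator given `σ(f)`, evaluated at a point whose
`f`-fiber has positive measure, equals the conditional probability given that fiber. -/
lemma condexp_ind_fiber {Ω α : Type*} [MeasurableSpace Ω] [MeasurableSpace α]
    [MeasurableSingletonClass α]
    (μ : Measure Ω) [IsProbabilityMeasure μ] {f : Ω → α} (hf : Measurable f)
    {A : Set Ω} (hA : MeasurableSet A) (ω : Ω) (hω : μ (f ⁻¹' {f ω}) ≠ 0) :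
    (μ[ind A | MeasurableSpace.comap f inferInstance]) ω
      = (ProbabilityTheory.cond μ (f ⁻¹' {f ω}) A).toReal := by
  have hm : MeasurableSpace.comap f inferInstance ≤ _ := hf.comap_le
  have hsm : MeasurableSet (f ⁻¹' {f ω}) := hf (measurableSet_singleton _)
  have hsm' : MeasurableSet[MeasurableSpace.comap f inferInstance] (f ⁻¹' {f ω}) :=
    ⟨{f ω}, measurableSet_singleton _, rfl⟩
  have hint : Integrable (ind A) μ := (integrable_const (1 : ℝ)).indicator hA
  have hmeas : @Measurable Ω ℝ (MeasurableSpace.comap f inferInstance) _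
      (μ[ind A | MeasurableSpace.comap f inferInstance]) :=
    stronglyMeasurable_condExp.measurable
  have heqon : Set.EqOn (μ[ind A | MeasurableSpace.comap f inferInstance])
      (fun _ => (μ[ind A | MeasurableSpace.comap f inferInstance]) ω) (f ⁻¹' {f ω}) := by
    intro y hy
    have hy' : f y = f ω := hy
    exact const_on_fibers hmeas hy'
  have h1 : ∫ y in f ⁻¹' {f ω}, (μ[ind A | MeasurableSpace.comap f inferInstance]) y ∂μ
      = (μ (f ⁻¹' {f ω})).toReal * (μ[ind A | MeasurableSpace.comap f inferInstance]) ω := by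
    rw [setIntegral_congr_fun hsm heqon, setIntegral_const, smul_eq_mul, measureReal_def]
  have h2 : ∫ y in f ⁻¹' {f ω}, (μ[ind A | MeasurableSpace.comap f inferInstance]) y ∂μ
      = (μ (f ⁻¹' {f ω} ∩ A)).toReal := by
    rw [setIntegral_condExp hm hint hsm']
    have h3 : ∫ y in f ⁻¹' {f ω}, ind A y ∂μ = ∫ _ in f ⁻¹' {f ω} ∩ A, (1 : ℝ) ∂μ := by
      simp only [ind]
      exact setIntegral_indicator hA
    rw [h3, setIntegral_const, smul_eq_mul, mul_one, measureReal_def]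
  have hfin : μ (f ⁻¹' {f ω}) ≠ ⊤ := measure_ne_top μ _
  have hpos : (μ (f ⁻¹' {f ω})).toReal ≠ 0 := by
    simp [ENNReal.toReal_eq_zero_iff, hω, hfin]
  have hcond : (ProbabilityTheory.cond μ (f ⁻¹' {f ω}) A).toReal
      = (μ (f ⁻¹' {f ω} ∩ A)).toReal / (μ (f ⁻¹' {f ω})).toReal := by
    rw [ProbabilityTheory.cond_apply hsm μ A, ENNReal.toReal_mul, ENNReal.toReal_inv]
    ring
  rw [hcond, ← h2, h1]
  field_simp

/-- If the system is `k`-observable at time `t`, then there is a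
Borel-measurable map `G` taking the joint conditional distribution of the next `k` tokens
given the history to the full-horizon conditional distribution of the future tokens given
the history, μ-almost surely. -/
theorem k_observable_full_horizon_factorization
    {Ω 𝒳 : Type*}
    [MeasurableSpace Ω] [MeasurableSpace 𝒳] [DiscreteMeasurableSpace 𝒳]
    [Fintype 𝒳] [Nonempty 𝒳]
    (μ : Measure Ω) [IsProbabilityMeasure μ]
    (T : ℕ) (hT : 2 ≤ T)
    (X : ℕ → Ω → 𝒳) (hX : ∀ t, Measurable (X t))
    (k : ℕ) (hk : 1 ≤ k) (t : ℕ) (ht1 : 1 ≤ t) (htk : t + k ≤ T)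
    -- the system is `k`-observable at time `t`
    (hobs : ∀ x x' : Fin t → 𝒳,
      0 < μ {ω | tup X 0 t ω = x} → 0 < μ {ω | tup X 0 t ω = x'} →
      (∀ w : Fin k → 𝒳,
        ProbabilityTheory.cond μ {ω | tup X 0 t ω = x} {ω | tup X t k ω = w} =
        ProbabilityTheory.cond μ {ω | tup X 0 t ω = x'} {ω | tup X t k ω = w}) →
      ∀ w' : Fin (T - t) → 𝒳,
        ProbabilityTheory.cond μ {ω | tup X 0 t ω = x} {ω | tup X t (T - t) ω = w'} =
        ProbabilityTheory.cond μ {ω | tup X 0 t ω = x'} {ω | tup X t (T - t) ω = w'}) :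
    -- conclusion: the full-horizon conditional is a measurable function of the next-`k`
    -- joint conditional
    ∃ G : ((Fin k → 𝒳) → ℝ) → ((Fin (T - t) → 𝒳) → ℝ), Measurable G ∧
      ∀ᵐ ω ∂μ,
        (fun w' : Fin (T - t) → 𝒳 =>
          (μ[ind {ω' | tup X t (T - t) ω' = w'} |
              MeasurableSpace.comap (tup X 0 t) inferInstance]) ω)
        =
        G (fun w : Fin k → 𝒳 =>
          (μ[ind {ω' | tup X t k ω' = w} |
              MeasurableSpace.comap (tup X 0 t) inferInstance]) ω) := by
  classical
  have htup : ∀ s n : ℕ, Measurable (tup X s n) := by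
    intro s n
    exact measurable_pi_lambda _ (fun i => hX _)
  have hf : Measurable (tup X 0 t) := htup 0 t
  -- history fiber sets
  set s : (Fin t → 𝒳) → Set Ω := fun x => tup X 0 t ⁻¹' {x} with hs_def
  have hseq : ∀ x, {ω | tup X 0 t ω = x} = s x := by
    intro x; ext ω; simp [hs_def]
  have hsm : ∀ x, MeasurableSet (s x) := fun x => hf (measurableSet_singleton x)
  -- finiteness of conditional probabilities
  have hfin : ∀ (x : Fin t → 𝒳) (A : Set Ω), μ (s x) ≠ 0 →
      ProbabilityTheory.cond μ (s x) A ≠ ⊤ := by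
    intro x A hx
    rw [ProbabilityTheory.cond_apply (hsm x) μ A]
    exact ENNReal.mul_ne_top (ENNReal.inv_ne_top.mpr hx) (measure_ne_top μ _)
  -- the target future events
  set Ak : (Fin k → 𝒳) → Set Ω := fun w => {ω' | tup X t k ω' = w} with hAk_def
  set Af : (Fin (T - t) → 𝒳) → Set Ω := fun w' => {ω' | tup X t (T - t) ω' = w'} with hAf_def
  have hAkm : ∀ w, MeasurableSet (Ak w) := by
    intro w
    have h : Ak w = tup X t k ⁻¹' {w} := by ext ω'; simp [hAk_def]
    rw [h]; exact htup t k (measurableSet_singleton w)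
  have hAfm : ∀ w', MeasurableSet (Af w') := by
    intro w'
    have h : Af w' = tup X t (T - t) ⁻¹' {w'} := by ext ω'; simp [hAf_def]
    rw [h]; exact htup t (T - t) (measurableSet_singleton w')
  -- the finite data
  set v : (Fin t → 𝒳) → (Fin k → 𝒳) → ℝ :=
    fun x w => (ProbabilityTheory.cond μ (s x) (Ak w)).toReal with hv_def
  set u : (Fin t → 𝒳) → (Fin (T - t) → 𝒳) → ℝ :=
    fun x w' => (ProbabilityTheory.cond μ (s x) (Af w')).toReal with hu_def
  -- the measurable map G
  set G : ((Fin k → 𝒳) → ℝ) → ((Fin (T - t) → 𝒳) → ℝ) :=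
    fun p => if h : ∃ x, μ (s x) ≠ 0 ∧ v x = p then u h.choose else fun _ => 0 with hG_def
  refine ⟨G, ?_, ?_⟩
  · -- measurability of G: it is constant off the (finite) range of v
    apply measurable_of_ne_const_finite (c := fun _ => (0 : ℝ))
    apply (Set.finite_range v).subset
    intro p hp
    by_cases h : ∃ x, μ (s x) ≠ 0 ∧ v x = p
    · obtain ⟨x, -, hx⟩ := h
      exact ⟨x, hx⟩
    · exact absurd (dif_neg h) hp
  · -- a.e. ω, the history fiber of ω has positive measure
    have hN : μ {ω | μ (s (tup X 0 t ω)) = 0} = 0 := by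
      have hsub : {ω | μ (s (tup X 0 t ω)) = 0} ⊆
          ⋃ x ∈ {x : Fin t → 𝒳 | μ (s x) = 0}, s x := by
        intro ω hω
        exact Set.mem_biUnion hω rfl
      refine measure_mono_null hsub ?_
      exact (measure_biUnion_null_iff (Set.to_countable _)).mpr (fun x hx => hx)
    have hae : ∀ᵐ ω ∂μ, μ (s (tup X 0 t ω)) ≠ 0 := by
      rw [ae_iff]
      simpa using hN
    filter_upwards [hae] with ω hω
    -- both conditional expectations at ω are the deterministic fiber values
    have hL : (fun w' : Fin (T - t) → 𝒳 =>
        (μ[ind {ω' | tup X t (T - t) ω' = w'} |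
          MeasurableSpace.comap (tup X 0 t) inferInstance]) ω) = u (tup X 0 t ω) := by
      funext w'
      exact condexp_ind_fiber μ hf (hAfm w') ω hω
    have hR : (fun w : Fin k → 𝒳 =>
        (μ[ind {ω' | tup X t k ω' = w} |
          MeasurableSpace.comap (tup X 0 t) inferInstance]) ω) = v (tup X 0 t ω) := by
      funext w
      exact condexp_ind_fiber μ hf (hAkm w) ω hω
    rw [hL, hR]
    -- it remains to show G (v (tup X 0 t ω)) = u (tup X 0 t ω)
    have hE : ∃ x, μ (s x) ≠ 0 ∧ v x = v (tup X 0 t ω) := ⟨tup X 0 t ω, hω, rfl⟩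
    rw [hG_def]
    simp only [dif_pos hE]
    obtain ⟨hx₀, hvx₀⟩ := hE.choose_spec
    set x₀ := hE.choose
    -- use k-observability to conclude u x₀ = u (tup X 0 t ω)
    have hcondk : ∀ w : Fin k → 𝒳,
        ProbabilityTheory.cond μ {ω' | tup X 0 t ω' = x₀} {ω' | tup X t k ω' = w} =
        ProbabilityTheory.cond μ {ω' | tup X 0 t ω' = tup X 0 t ω} {ω' | tup X t k ω' = w} := by
      intro w
      rw [hseq x₀, hseq (tup X 0 t ω)]
      have h := congrFun hvx₀ w
      simp only [hv_def] at h
      exact (ENNReal.toReal_eq_toReal_iff' (hfin x₀ (Ak w) hx₀)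
        (hfin (tup X 0 t ω) (Ak w) hω)).mp h
    have hfull := hobs x₀ (tup X 0 t ω)
      (by rw [hseq x₀]; exact pos_iff_ne_zero.mpr hx₀)
      (by rw [hseq (tup X 0 t ω)]; exact pos_iff_ne_zero.mpr hω)
      hcondk
    funext w'
    have h := hfull w'
    rw [hseq x₀, hseq (tup X 0 t ω)] at h
    simp only [hu_def]
    rw [h]
end
end
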